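/- arXiv:2001.04150 — 8 statements merged into one kernel-verified Lean document; each statement's English description precedes it below -/
import Mathlib

section
/- For all integers 0 ≤ k ≤ n and prime power q ≥ 2, the Gaussian binomial coefficient satisfies q^{k(n-k)} ≤ [n choose k]_q < 4 · q^{k(n-k)}. -/
/-- The Gaussian (q-)binomial coefficient `[n choose k]_q`, as a real number. -/
noncomputable def qBinom (q n k : ℕ) : ℝ :=
  ∏ i ∈ Finset.range k, ((q : ℝ) ^ (n - i) - 1) / ((q : ℝ) ^ (k - i) - 1)

lemma weier (x : ℝ) (h0 : 0 ≤ x) (h1 : x < 1) (k : ℕ) :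
    1 - ∑ j ∈ Finset.range k, x ^ (j + 2) ≤ ∏ j ∈ Finset.range k, (1 - x ^ (j + 2)) := by
  induction k with
  | zero => simp
  | succ m ih =>
    rw [Finset.sum_range_succ, Finset.prod_range_succ]
    have hP : (0:ℝ) ≤ ∏ j ∈ Finset.range m, (1 - x ^ (j + 2)) := by
      apply Finset.prod_nonneg
      intro i _
      have : x ^ (i + 2) ≤ 1 := pow_le_one₀ h0 h1.le
      linarith
    have hS : (0:ℝ) ≤ ∑ j ∈ Finset.range m, x ^ (j + 2) :=
      Finset.sum_nonneg fun i _ => pow_nonneg h0 _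
    have hx2 : (0:ℝ) ≤ x ^ (m + 2) := pow_nonneg h0 _
    have hx2' : x ^ (m + 2) ≤ 1 := pow_le_one₀ h0 h1.le
    nlinarith [ih, mul_nonneg hS hx2]

lemma tail (x : ℝ) (h0 : 0 < x) (h : x ≤ 1 / 2) (k : ℕ) :
    1 / 4 < ∏ j ∈ Finset.range k, (1 - x ^ (j + 1)) := by
  cases k with
  | zero => norm_num
  | succ m =>
    have h1 : x < 1 := by linarith
    rw [Finset.prod_range_succ']
    have hshift : ∀ j, 1 - x ^ (j + 1 + 1) = 1 - x ^ (j + 2) := by intro j; ring_nf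
    simp only [hshift, pow_zero, pow_one]
    have hw := weier x h0.le h1 m
    have hgeom : (∑ i ∈ Finset.range m, x ^ i) * (x - 1) = x ^ m - 1 := geom_sum_mul x m
    have hsum : ∑ j ∈ Finset.range m, x ^ (j + 2) = x ^ 2 * ∑ i ∈ Finset.range m, x ^ i := by
      rw [Finset.mul_sum]
      exact Finset.sum_congr rfl fun i _ => by ring
    have hxm : (0:ℝ) < x ^ m := pow_pos h0 m
    nlinarith [hw, hgeom, hsum, hxm, sq_nonneg x, mul_pos (mul_pos h0 h0) hxm]

theorem gaussian_binomial_bounds (q n k : ℕ) (hk : k ≤ n) (hq : 2 ≤ q)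
    (hpp : IsPrimePow q) :
    (q : ℝ) ^ (k * (n - k)) ≤ qBinom q n k ∧
      qBinom q n k < 4 * (q : ℝ) ^ (k * (n - k)) := by
  set Q : ℝ := (q : ℝ) with hQ
  have hQ2 : (2:ℝ) ≤ Q := by rw [hQ]; exact_mod_cast hq
  have hQ1 : (1:ℝ) < Q := by linarith
  have hQ0 : (0:ℝ) < Q := by linarith
  have hden : ∀ i ∈ Finset.range k, (0:ℝ) < Q ^ (k - i) - 1 := by
    intro i hi
    simp only [Finset.mem_range] at hi
    have : (1:ℝ) < Q ^ (k - i) := one_lt_pow₀ hQ1 (by omega)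
    linarith
  have hexp : ∀ i ∈ Finset.range k, (n - k) + (k - i) = n - i := by
    intro i hi; simp only [Finset.mem_range] at hi; omega
  constructor
  · -- lower bound
    have h1 : ∏ _i ∈ Finset.range k, Q ^ (n - k) ≤ qBinom q n k := by
      unfold qBinom
      apply Finset.prod_le_prod
      · intro i _; positivity
      · intro i hi
        rw [le_div_iff₀ (hden i hi)]
        have h2 : Q ^ (n - k) * (Q ^ (k - i) - 1) = Q ^ (n - i) - Q ^ (n - k) := by
          rw [mul_sub, mul_one, ← pow_add, hexp i hi]
        rw [h2]
        have : (1:ℝ) ≤ Q ^ (n - k) := one_le_pow₀ hQ1.le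
        linarith
    calc Q ^ (k * (n - k)) = ∏ _i ∈ Finset.range k, Q ^ (n - k) := by
          rw [Finset.prod_const, Finset.card_range, ← pow_mul, mul_comm k (n - k)]
    _ ≤ qBinom q n k := h1
  · -- upper bound
    have hTbound : 1 / 4 < ∏ j ∈ Finset.range k, (1 - Q⁻¹ ^ (j + 1)) :=
      tail Q⁻¹ (by positivity) (by rw [inv_le_comm₀ hQ0 (by norm_num)]; linarith) k
    have hTpos : (0:ℝ) < ∏ j ∈ Finset.range k, (1 - Q⁻¹ ^ (j + 1)) := by linarith
    have hub : qBinom q n k ≤ Q ^ (k * (n - k)) *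
        (∏ j ∈ Finset.range k, (1 - Q⁻¹ ^ (j + 1)))⁻¹ := by
      have step : qBinom q n k ≤ ∏ i ∈ Finset.range k,
          Q ^ (n - k) * (1 - Q⁻¹ ^ (k - i))⁻¹ := by
        unfold qBinom
        apply Finset.prod_le_prod
        · intro i hi
          apply div_nonneg _ (hden i hi).le
          have hni : 1 ≤ n - i := by simp only [Finset.mem_range] at hi; omega
          have : (1:ℝ) < Q ^ (n - i) := one_lt_pow₀ hQ1 (by omega)
          linarith
        · intro i hi
          have hd := hden i hi
          have hpos : (0:ℝ) < Q ^ (k - i) := pow_pos hQ0 _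
          have key : (1 - Q⁻¹ ^ (k - i)) = (Q ^ (k - i) - 1) / Q ^ (k - i) := by
            rw [inv_pow]
            field_simp
          rw [key, inv_div]
          have he : Q ^ (n - k) * (Q ^ (k - i) / (Q ^ (k - i) - 1)) =
              Q ^ (n - i) / (Q ^ (k - i) - 1) := by
            rw [← mul_div_assoc, ← pow_add, hexp i hi]
          rw [he, div_le_div_iff₀ hd hd]
          have hQni : (0:ℝ) < Q ^ (n - i) := pow_pos hQ0 _
          nlinarith [hd, hQni]
      calc qBinom q n k ≤ _ := step
      _ = Q ^ (k * (n - k)) * (∏ j ∈ Finset.range k, (1 - Q⁻¹ ^ (j + 1)))⁻¹ := by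
        rw [Finset.prod_mul_distrib, Finset.prod_const, Finset.card_range, ← pow_mul,
          mul_comm (n - k) k, ← Finset.prod_inv_distrib,
          ← Finset.prod_range_reflect (fun j => (1 - Q⁻¹ ^ (j + 1))⁻¹) k]
        apply congrArg
        apply Finset.prod_congr rfl
        intro i hi
        simp only [Finset.mem_range] at hi
        have : k - 1 - i + 1 = k - i := by omega
        rw [this]
    have hinv : (∏ j ∈ Finset.range k, (1 - Q⁻¹ ^ (j + 1)))⁻¹ < 4 := by
      rw [inv_lt_iff_one_lt_mul₀ hTpos]
      nlinarith [hTbound]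
    have hQp : (0:ℝ) < Q ^ (k * (n - k)) := pow_pos hQ0 _
    calc qBinom q n k ≤ _ := hub
    _ < 4 * Q ^ (k * (n - k)) := by nlinarith [hinv, hQp]
end

section
/- Let h, ℓ, t ≥ 1 and ε ≥ 0 be integers, and let S be a finite collection of subspaces of F_q^{ht} such that each subspace has dimension at most ℓt and the sum of any two distinct members has dimension at least (h-ε)t. Then |S| ≤ [ht choose 2ℓt - (h-ε)t + 1]_q / [ℓt choose 2ℓt - (h-ε)t + 1]_q. -/
open Module Submodule

lemma aux_ext {K V : Type*} [Field K] [AddCommGroup V] [Module K V] [FiniteDimensional K V]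
    (m : ℕ) (hm : m ≤ finrank K V) :
    ∀ N : Submodule K V, finrank K N ≤ m → ∃ W : Submodule K V, N ≤ W ∧ finrank K W = m := by
  induction m with
  | zero => exact fun N hN => ⟨N, le_refl N, le_antisymm hN (Nat.zero_le _)⟩
  | succ m ih =>
    intro N hN
    by_cases hc : finrank K N = m + 1
    · exact ⟨N, le_refl N, hc⟩
    obtain ⟨W, hNW, hWm⟩ := ih (le_of_lt hm) N (by omega)
    have hlt : finrank K W < finrank K V := by omega
    obtain ⟨x, hx⟩ := Submodule.exists_of_finrank_lt W hlt
    have hxW : x ∉ W := by simpa using hx 1 one_ne_zero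
    have hx0 : x ≠ 0 := fun h => hxW (h ▸ W.zero_mem)
    have hinf : W ⊓ span K {x} = ⊥ := by
      rw [eq_bot_iff]
      rintro y hy
      obtain ⟨hyW, hyx⟩ := Submodule.mem_inf.mp hy
      obtain ⟨a, rfl⟩ := Submodule.mem_span_singleton.mp hyx
      rcases eq_or_ne a 0 with rfl | ha
      · simp
      · exact absurd (by simpa [ha] using W.smul_mem a⁻¹ hyW) hxW
    have hkey := Submodule.finrank_sup_add_finrank_inf_eq W (span K {x})
    rw [hinf, finrank_span_singleton hx0, hWm] at hkey
    refine ⟨W ⊔ span K {x}, le_trans hNW le_sup_left, ?_⟩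
    simpa using hkey

lemma aux_count {K V : Type*} [Field K] [Fintype K] [AddCommGroup V] [Module K V] [Finite V]
    (W : Submodule K V) (k : ℕ) (hk : k ≤ finrank K W) :
    Nat.card {s : Fin k → V // LinearIndependent K s ∧ ∀ i, s i ∈ W} =
      ∏ i : Fin k, (Fintype.card K ^ finrank K W - Fintype.card K ^ i.val) := by
  rw [← card_linearIndependent (V := W) hk]
  apply Nat.card_congr
  refine
    { toFun := fun s => ⟨fun i => ⟨s.1 i, s.2.2 i⟩, ?_⟩
      invFun := fun s => ⟨fun i => (s.1 i : V), ?_, fun i => (s.1 i).2⟩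
      left_inv := fun s => by ext i; rfl
      right_inv := fun s => by ext i; rfl }
  · exact LinearIndependent.of_comp W.subtype (by convert s.2.1 <;> rfl)
  · exact s.2.map' W.subtype (Submodule.ker_subtype W)

theorem middle_layer_upper_bound_alpha_two (q h ℓ t ε : ℕ)
    (K : Type) [Field K] [Fintype K] (hq : Fintype.card K = q)
    (hh : 1 ≤ h) (hℓ : 1 ≤ ℓ) (ht : 1 ≤ t) (hhe : h ≤ 2 * ℓ + ε)
    (hwd : 2 * ℓ * t - (h - ε) * t + 1 ≤ ℓ * t)
    (S : Finset (Submodule K (Fin (h * t) → K)))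
    (hdim : ∀ W ∈ S, Module.finrank K W ≤ ℓ * t)
    (hpair : ∀ U ∈ S, ∀ V ∈ S, U ≠ V → (h - ε) * t ≤ Module.finrank K ↥(U ⊔ V)) :
    (S.card : ℝ) ≤
      qBinom q (h * t) (2 * ℓ * t - (h - ε) * t + 1) /
        qBinom q (ℓ * t) (2 * ℓ * t - (h - ε) * t + 1) := by
  classical
  set k := 2 * ℓ * t - (h - ε) * t + 1 with hkdef
  -- arithmetic facts
  have hq2 : 2 ≤ q := hq ▸ Fintype.one_lt_card
  have e2 : 2 * ℓ * t = 2 * (ℓ * t) := by ring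
  have hd2 : (h - ε) * t ≤ 2 * (ℓ * t) := by
    calc (h - ε) * t ≤ (2 * ℓ) * t := Nat.mul_le_mul_right t (by omega)
    _ = 2 * (ℓ * t) := by ring
  have hBm : ℓ * t + 1 ≤ (h - ε) * t := by omega
  have hdh : (h - ε) * t ≤ h * t := Nat.mul_le_mul_right t (by omega)
  have hmn : ℓ * t < h * t := by omega
  have hkm : k ≤ ℓ * t := hwd
  have hkk : k = 2 * (ℓ * t) - (h - ε) * t + 1 := by omega
  have hrk : finrank K (Fin (h * t) → K) = h * t := Module.finrank_fin_fun K
  -- extend each member of S to dimension ℓ*t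
  have hex : ∀ W ∈ S, ∃ W' : Submodule K (Fin (h * t) → K),
      W ≤ W' ∧ finrank K W' = ℓ * t :=
    fun W hW => aux_ext (ℓ * t) (by omega) W (hdim W hW)
  choose! E hE1 hE2 using hex
  -- the finset of independent k-tuples inside a subspace
  set T : Submodule K (Fin (h * t) → K) → Finset (Fin k → (Fin (h * t) → K)) :=
    fun U => Finset.univ.filter (fun s => LinearIndependent K s ∧ ∀ i, s i ∈ U) with hTdef
  have hTcard : ∀ U : Submodule K (Fin (h * t) → K), finrank K U = ℓ * t →
      (T U).card = ∏ i : Fin k, (q ^ (ℓ * t) - q ^ i.val) := by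
    intro U hU
    have h1 : (T U).card =
        Nat.card {s : Fin k → (Fin (h * t) → K) // LinearIndependent K s ∧ ∀ i, s i ∈ U} := by
      rw [Nat.card_eq_fintype_card, Fintype.card_subtype]
    have hk' : k ≤ finrank K ↥U := hU ▸ hkm
    rw [h1]
    rw [aux_count U k hk']
    rw [hU]
    rw [hq]
  -- disjointness
  have hdisj : ∀ U ∈ S, ∀ V ∈ S, U ≠ V → Disjoint (T (E U)) (T (E V)) := by
    intro U hU V hV hne
    rw [Finset.disjoint_left]
    intro s hsU hsV
    simp only [hTdef, Finset.mem_filter, Finset.mem_univ, true_and] at hsU hsV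
    have hsp : span K (Set.range s) ≤ E U ⊓ E V := by
      rw [span_le]
      rintro _ ⟨i, rfl⟩
      exact Submodule.mem_inf.mpr ⟨hsU.2 i, hsV.2 i⟩
    have h1 : k ≤ finrank K ↥(E U ⊓ E V) := by
      have hs := finrank_span_eq_card hsU.1
      simpa [hs] using Submodule.finrank_mono hsp
    have h2 := Submodule.finrank_sup_add_finrank_inf_eq (E U) (E V)
    rw [hE2 U hU, hE2 V hV] at h2
    have h3 : (h - ε) * t ≤ finrank K ↥(E U ⊔ E V) :=
      le_trans (hpair U hU V hV hne)
        (Submodule.finrank_mono (sup_le_sup (hE1 U hU) (hE1 V hV)))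
    omega
  -- the natural-number counting inequality
  have hsum : S.card * (∏ i : Fin k, (q ^ (ℓ * t) - q ^ i.val)) ≤
      ∏ i : Fin k, (q ^ (h * t) - q ^ i.val) := by
    have c1 : ∑ W ∈ S, (T (E W)).card = S.card * (∏ i : Fin k, (q ^ (ℓ * t) - q ^ i.val)) := by
      rw [Finset.sum_congr rfl (fun W hW => hTcard (E W) (hE2 W hW)), Finset.sum_const,
        smul_eq_mul]
    rw [← c1, ← Finset.card_biUnion hdisj]
    have hsub : S.biUnion (fun W => T (E W)) ⊆
        Finset.univ.filter (fun s : Fin k → (Fin (h * t) → K) => LinearIndependent K s) := by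
      intro s hs
      rw [Finset.mem_biUnion] at hs
      obtain ⟨W, hW, hsW⟩ := hs
      simp only [hTdef, Finset.mem_filter, Finset.mem_univ, true_and] at hsW ⊢
      exact hsW.1
    refine le_trans (Finset.card_le_card hsub) ?_
    rw [← Fintype.card_subtype, ← Nat.card_eq_fintype_card,
      card_linearIndependent (V := Fin (h * t) → K) (by omega), hrk, hq]
  -- pass to the reals
  have hq1 : (1 : ℝ) < (q : ℝ) := by exact_mod_cast (by omega : 1 < q)
  have hq0 : (0 : ℝ) < (q : ℝ) := lt_trans one_pos hq1
  have castp : ∀ N : ℕ, k ≤ N → ((∏ i : Fin k, (q ^ N - q ^ i.val) : ℕ) : ℝ) =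
      ∏ i ∈ Finset.range k, ((q : ℝ) ^ N - (q : ℝ) ^ i) := by
    intro N hN
    rw [← Fin.prod_univ_eq_prod_range (fun i => ((q : ℝ) ^ N - (q : ℝ) ^ i)) k, Nat.cast_prod]
    refine Finset.prod_congr rfl fun i _ => ?_
    rw [Nat.cast_sub (Nat.pow_le_pow_right (by omega) (by omega))]
    push_cast
    ring
  set Pn : ℝ := ∏ i ∈ Finset.range k, ((q : ℝ) ^ (h * t) - (q : ℝ) ^ i) with hPn
  set Pm : ℝ := ∏ i ∈ Finset.range k, ((q : ℝ) ^ (ℓ * t) - (q : ℝ) ^ i) with hPm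
  have hPmpos : 0 < Pm := by
    refine Finset.prod_pos fun i hi => ?_
    rw [Finset.mem_range] at hi
    have : (q : ℝ) ^ i < (q : ℝ) ^ (ℓ * t) := pow_lt_pow_right₀ hq1 (by omega)
    linarith
  have hreal : (S.card : ℝ) * Pm ≤ Pn := by
    rw [hPn, hPm, ← castp (h * t) (by omega), ← castp (ℓ * t) (by omega)]
    exact_mod_cast hsum
  have hmain : (S.card : ℝ) ≤ Pn / Pm := (le_div_iff₀ hPmpos).mpr hreal
  -- identify the right-hand side
  refine le_trans hmain (le_of_eq ?_)
  set D : ℝ := ∏ i ∈ Finset.range k, ((q : ℝ) ^ (k - i) - 1) with hD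
  set Q : ℝ := ∏ i ∈ Finset.range k, (q : ℝ) ^ i with hQ
  have hDpos : 0 < D := by
    refine Finset.prod_pos fun i hi => ?_
    rw [Finset.mem_range] at hi
    have : (1 : ℝ) < (q : ℝ) ^ (k - i) := one_lt_pow₀ hq1 (by omega)
    linarith
  have hQpos : 0 < Q := Finset.prod_pos fun i _ => pow_pos hq0 i
  have hNum : ∀ N : ℕ, k ≤ N →
      (∏ i ∈ Finset.range k, ((q : ℝ) ^ N - (q : ℝ) ^ i)) =
        Q * ∏ i ∈ Finset.range k, ((q : ℝ) ^ (N - i) - 1) := by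
    intro N hN
    rw [hQ, ← Finset.prod_mul_distrib]
    refine Finset.prod_congr rfl fun i hi => ?_
    rw [Finset.mem_range] at hi
    rw [mul_sub, mul_one, ← pow_add]
    have : i + (N - i) = N := by omega
    rw [this]
  have hNmpos : 0 < ∏ i ∈ Finset.range k, ((q : ℝ) ^ (ℓ * t - i) - 1) := by
    refine Finset.prod_pos fun i hi => ?_
    rw [Finset.mem_range] at hi
    have : (1 : ℝ) < (q : ℝ) ^ (ℓ * t - i) := one_lt_pow₀ hq1 (by omega)
    linarith
  have hqB : ∀ N : ℕ, qBinom q N k =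
      (∏ i ∈ Finset.range k, ((q : ℝ) ^ (N - i) - 1)) / D := by
    intro N
    rw [qBinom, Finset.prod_div_distrib, hD]
  rw [hqB, hqB, hPn, hPm, hNum (h * t) (by omega), hNum (ℓ * t) (by omega)]
  rw [div_div_div_cancel_right₀]
  · rw [mul_div_mul_left _ _ (ne_of_gt hQpos)]
  · exact ne_of_gt hDpos
end

section
/- Let A be chosen uniformly at random from the αℓt × ht matrices over F_q, where α ≥ 2, h, ℓ, t ≥ 1, ε ≥ 0 and h ≤ αℓ + ε. Then the probability that rank(A) < (h-ε)t is at most 2γ · q^{(h-αℓ-ε)εt² + (h-αℓ-2ε)t - 1}, where γ = 4. -/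
open Module

set_option linter.unusedSectionVars false
set_option maxHeartbeats 1000000

section Aux

variable {K : Type} [Field K] [Fintype K]

private lemma aux_prod_one_sub_half_ge (s : ℕ) :
    1/4 + (1/2:ℝ)^(s+1) ≤ ∏ j ∈ Finset.range s, (1 - (1/2:ℝ)^(j+1)) := by
  induction s with
  | zero => norm_num
  | succ n ih =>
    rw [Finset.prod_range_succ]
    rcases Nat.eq_zero_or_pos n with rfl | hn
    · norm_num
    · have hx1 : (0:ℝ) < (1/2:ℝ)^(n+1) := by positivity
      have hx2 : (1/2:ℝ)^(n+1) ≤ (1/2:ℝ)^2 :=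
        pow_le_pow_of_le_one (by norm_num) (by norm_num) (by omega)
      have he : (1/2:ℝ)^(n+1+1) = (1/2)*(1/2)^(n+1) := by ring
      nlinarith [ih]

private lemma aux_pow_sq_le_four_mul_prod {q : ℕ} (hq : 2 ≤ q) (s : ℕ) :
    (q:ℝ)^(s*s) ≤ 4 * ∏ i ∈ Finset.range s, ((q:ℝ)^s - (q:ℝ)^i) := by
  have hq1 : (1:ℝ) ≤ q := by exact_mod_cast Nat.one_le_of_lt hq
  have hq2 : (2:ℝ) ≤ q := by exact_mod_cast hq
  have key : ∀ i ∈ Finset.range s, (q:ℝ)^s * (1 - (1/2:ℝ)^(s-i)) ≤ (q:ℝ)^s - (q:ℝ)^i := by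
    intro i hi
    rw [Finset.mem_range] at hi
    have h1 : (q:ℝ)^i * (2:ℝ)^(s-i) ≤ (q:ℝ)^s := by
      calc (q:ℝ)^i * (2:ℝ)^(s-i) ≤ (q:ℝ)^i * (q:ℝ)^(s-i) := by
            have := pow_le_pow_left₀ (by norm_num : (0:ℝ) ≤ 2) hq2 (s-i)
            have h0 : (0:ℝ) ≤ (q:ℝ)^i := by positivity
            nlinarith
        _ = (q:ℝ)^s := by rw [← pow_add]; congr 1; omega
    have h2 : (q:ℝ)^s * (1/2:ℝ)^(s-i) ≥ (q:ℝ)^i := by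
      have hpos : (0:ℝ) < (2:ℝ)^(s-i) := by positivity
      have hh : (1/2:ℝ)^(s-i) = 1 / (2:ℝ)^(s-i) := by rw [div_pow, one_pow]
      rw [hh, ge_iff_le, mul_one_div, le_div_iff₀ hpos]
      linarith
    nlinarith
  have hnn : ∀ i ∈ Finset.range s, (0:ℝ) ≤ (q:ℝ)^s * (1 - (1/2:ℝ)^(s-i)) := by
    intro i hi
    rw [Finset.mem_range] at hi
    have h1 : (1/2:ℝ)^(s-i) ≤ (1/2:ℝ)^1 :=
      pow_le_pow_of_le_one (by norm_num) (by norm_num) (by omega)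
    have h2 : (0:ℝ) ≤ (q:ℝ)^s := by positivity
    nlinarith
  have hprod : ∏ i ∈ Finset.range s, ((q:ℝ)^s * (1 - (1/2:ℝ)^(s-i))) ≤
      ∏ i ∈ Finset.range s, ((q:ℝ)^s - (q:ℝ)^i) := Finset.prod_le_prod hnn key
  have hsplit : ∏ i ∈ Finset.range s, ((q:ℝ)^s * (1 - (1/2:ℝ)^(s-i))) =
      (q:ℝ)^(s*s) * ∏ j ∈ Finset.range s, (1 - (1/2:ℝ)^(j+1)) := by
    rw [Finset.prod_mul_distrib, Finset.prod_const, Finset.card_range, ← pow_mul]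
    congr 1
    rw [← Finset.prod_range_reflect]
    apply Finset.prod_congr rfl
    intro j hj
    rw [Finset.mem_range] at hj
    congr 2
    omega
  have h4 := aux_prod_one_sub_half_ge s
  have hp : (0:ℝ) < (q:ℝ)^(s*s) := by positivity
  have hhalf : (0:ℝ) < (1/2:ℝ)^(s+1) := by positivity
  nlinarith [hprod, hsplit]

noncomputable def auxGrassMap (m s : ℕ)
    (p : {W : Submodule K (Fin m → K) // finrank K W = s} ×
         {v : Fin s → (Fin s → K) // LinearIndependent K v}) :
    {v : Fin s → (Fin m → K) // LinearIndependent K v} :=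
  let e := (Module.finBasisOfFinrankEq K p.1.1 p.1.2).equivFun
  let g : (Fin s → K) →ₗ[K] (Fin m → K) := p.1.1.subtype.comp (e.symm : (Fin s → K) →ₗ[K] p.1.1)
  ⟨g ∘ p.2.1, p.2.2.map' g (by
    rw [LinearMap.ker_eq_bot]
    exact p.1.1.injective_subtype.comp e.symm.injective)⟩

private lemma auxGrassMap_injective (m s : ℕ) :
    Function.Injective (auxGrassMap (K := K) m s) := by
  rintro ⟨⟨W, hW⟩, ⟨v, hv⟩⟩ ⟨⟨W', hW'⟩, ⟨v', hv'⟩⟩ h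
  have hspan : ∀ (W : Submodule K (Fin m → K)) (hW : finrank K W = s)
      (v : Fin s → (Fin s → K)) (hv : LinearIndependent K v),
      Submodule.span K (Set.range ((auxGrassMap m s ⟨⟨W, hW⟩, ⟨v, hv⟩⟩ : _)).1) = W := by
    intro W hW v hv
    set e := (Module.finBasisOfFinrankEq K W hW).equivFun
    set g : (Fin s → K) →ₗ[K] (Fin m → K) := W.subtype.comp (e.symm : (Fin s → K) →ₗ[K] W)
    have h1 : Submodule.span K (Set.range v) = ⊤ := by
      apply Submodule.eq_top_of_finrank_eq
      rw [finrank_span_eq_card hv]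
      simp [Module.finrank_fintype_fun_eq_card]
    calc Submodule.span K (Set.range (g ∘ v))
        = Submodule.map g (Submodule.span K (Set.range v)) := by
          rw [Set.range_comp, Submodule.span_image]
      _ = Submodule.map g ⊤ := by rw [h1]
      _ = W := by
          rw [Submodule.map_top, LinearMap.range_comp]
          simp [LinearEquiv.range]
  have hWW : W = W' := by
    rw [← hspan W hW v hv, ← hspan W' hW' v' hv', h]
  subst hWW
  have hWh : hW = hW' := rfl
  subst hWh
  have hvv : v = v' := by
    have h2 := congrArg Subtype.val h
    funext i
    have h3 := congrFun h2 i
    simp only [auxGrassMap, Function.comp] at h3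
    set e := (Module.finBasisOfFinrankEq K W hW).equivFun
    have h4 : (e.symm (v i) : Fin m → K) = (e.symm (v' i) : Fin m → K) := h3
    exact e.symm.injective (Subtype.ext h4)
  simp [hvv]

private lemma aux_card_LI (m s : ℕ) (hs : s ≤ m) :
    Nat.card { v : Fin s → (Fin m → K) // LinearIndependent K v } =
      ∏ i : Fin s, (Fintype.card K ^ m - Fintype.card K ^ i.val) := by
  have := card_linearIndependent (K := K) (V := Fin m → K) (k := s)
    (by simpa [Module.finrank_fintype_fun_eq_card] using hs)
  simpa [Module.finrank_fintype_fun_eq_card] using this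

private lemma aux_grass_mul_le (m s : ℕ) (hs : s ≤ m) :
    Nat.card {W : Submodule K (Fin m → K) // finrank K W = s} *
      ∏ i : Fin s, (Fintype.card K ^ s - Fintype.card K ^ i.val)
      ≤ Fintype.card K ^ (m * s) := by
  have h1 : Nat.card ({W : Submodule K (Fin m → K) // finrank K W = s} ×
         {v : Fin s → (Fin s → K) // LinearIndependent K v}) ≤
      Nat.card {v : Fin s → (Fin m → K) // LinearIndependent K v} :=
    Nat.card_le_card_of_injective _ (auxGrassMap_injective m s)
  rw [Nat.card_prod, aux_card_LI s s le_rfl, aux_card_LI m s hs] at h1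
  refine h1.trans ?_
  calc ∏ i : Fin s, (Fintype.card K ^ m - Fintype.card K ^ i.val)
      ≤ ∏ _i : Fin s, Fintype.card K ^ m := by
        apply Finset.prod_le_prod'
        intros; omega
    _ = Fintype.card K ^ (m * s) := by
        rw [Finset.prod_const, ← pow_mul, Finset.card_univ, Fintype.card_fin, mul_comm]

noncomputable def auxRankMap (m n r : ℕ)
    (A : {A : Matrix (Fin m) (Fin n) K // A.rank < r}) :
    Σ s : Fin r, Σ W : {W : Submodule K (Fin m → K) // finrank K W = (s:ℕ)}, (Fin n → W.1) :=
  ⟨⟨A.1.rank, A.2⟩, ⟨LinearMap.range A.1.mulVecLin, rfl⟩,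
    fun j => ⟨A.1.mulVecLin (Pi.single j 1), LinearMap.mem_range_self _ _⟩⟩

private lemma auxRankMap_injective (m n r : ℕ) :
    Function.Injective (auxRankMap (K := K) m n r) := by
  intro A B h
  ext i j
  have := congrArg (fun p : (Σ s : Fin r,
      Σ W : {W : Submodule K (Fin m → K) // finrank K W = (s:ℕ)}, (Fin n → W.1)) =>
    ((p.2.2 j : Fin m → K) i)) h
  simpa [auxRankMap, Matrix.mulVecLin_apply, Matrix.mulVec_single] using this

private lemma aux_card_target (m n r : ℕ) :
    Nat.card (Σ s : Fin r,
        Σ W : {W : Submodule K (Fin m → K) // finrank K W = (s:ℕ)}, (Fin n → W.1)) =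
      ∑ s : Fin r, Nat.card {W : Submodule K (Fin m → K) // finrank K W = (s:ℕ)} *
        (Fintype.card K)^((s:ℕ)*n) := by
  classical
  have hfiber : ∀ (s : Fin r),
      Nat.card (Σ W : {W : Submodule K (Fin m → K) // finrank K W = (s:ℕ)}, (Fin n → W.1)) =
      Nat.card {W : Submodule K (Fin m → K) // finrank K W = (s:ℕ)} *
        (Fintype.card K)^((s:ℕ)*n) := by
    intro s
    letI : Fintype {W : Submodule K (Fin m → K) // finrank K W = (s:ℕ)} := Fintype.ofFinite _
    letI : ∀ W : {W : Submodule K (Fin m → K) // finrank K W = (s:ℕ)}, Fintype (W.1) :=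
      fun W => Fintype.ofFinite _
    rw [Nat.card_eq_fintype_card, Fintype.card_sigma]
    have hW : ∀ W : {W : Submodule K (Fin m → K) // finrank K W = (s:ℕ)},
        Fintype.card (Fin n → W.1) = (Fintype.card K)^((s:ℕ)*n) := by
      intro W
      rw [Fintype.card_fun, card_eq_pow_finrank (K := K) (V := W.1), W.2, ← pow_mul,
        Fintype.card_fin]
    rw [Finset.sum_congr rfl (fun W _ => hW W), Finset.sum_const, Finset.card_univ,
      smul_eq_mul, Nat.card_eq_fintype_card]
  letI : ∀ s : Fin r, Fintype
      (Σ W : {W : Submodule K (Fin m → K) // finrank K W = (s:ℕ)}, (Fin n → W.1)) :=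
    fun s => Fintype.ofFinite _
  rw [Nat.card_eq_fintype_card, Fintype.card_sigma]
  apply Finset.sum_congr rfl
  intro s _
  rw [← hfiber s, Nat.card_eq_fintype_card]

private lemma aux_count_bound (m n r : ℕ) (hr : 1 ≤ r) (hrm : r ≤ m)
    (hmn : 2*r ≤ m + n + 1) :
    (Nat.card {A : Matrix (Fin m) (Fin n) K // A.rank < r} : ℝ) ≤
      8 * (Fintype.card K:ℝ)^((m+n)*(r-1)) / (Fintype.card K:ℝ)^((r-1)*(r-1)) := by
  have hq : 2 ≤ Fintype.card K := Fintype.one_lt_card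
  set q := Fintype.card K with hqdef
  have hq0 : (0:ℝ) < (q:ℝ) := by positivity
  have hq2 : (2:ℝ) ≤ (q:ℝ) := by exact_mod_cast hq
  have card_le_target : Nat.card {A : Matrix (Fin m) (Fin n) K // A.rank < r} ≤
      ∑ s : Fin r, Nat.card {W : Submodule K (Fin m → K) // finrank K W = (s:ℕ)} *
        q^((s:ℕ)*n) := by
    rw [← aux_card_target m n r]
    exact Nat.card_le_card_of_injective _ (auxRankMap_injective m n r)
  have term_bound : ∀ s : ℕ, s ≤ r - 1 →
      ((Nat.card {W : Submodule K (Fin m → K) // finrank K W = s} : ℝ) * (q:ℝ)^(s*n)) ≤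
      4 * (q:ℝ)^((m+n)*(r-1)) / (q:ℝ)^((r-1)*(r-1)) * (1/2:ℝ)^(r-1-s) := by
    intro s hs
    have hsm : s ≤ m := by omega
    set G := Nat.card {W : Submodule K (Fin m → K) // finrank K W = s} with hG
    set P : ℝ := ∏ i ∈ Finset.range s, ((q:ℝ)^s - (q:ℝ)^i) with hP
    have hcast : ((∏ i : Fin s, (q ^ s - q ^ i.val) : ℕ) : ℝ) = P := by
      rw [show (∏ i : Fin s, (q ^ s - q ^ i.val)) =
          ∏ i ∈ Finset.range s, (q^s - q^i) from
        Fin.prod_univ_eq_prod_range (fun i => q^s - q^i) s]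
      rw [Nat.cast_prod]
      apply Finset.prod_congr rfl
      intro i hi
      rw [Finset.mem_range] at hi
      rw [Nat.cast_sub (Nat.pow_le_pow_right (by omega) hi.le)]
      push_cast; ring
    have hGP : (G : ℝ) * P ≤ (q:ℝ)^(m*s) := by
      calc (G:ℝ) * P = ((G * ∏ i : Fin s, (q ^ s - q ^ i.val) : ℕ) : ℝ) := by
            rw [Nat.cast_mul, hcast]
        _ ≤ ((q ^ (m*s) : ℕ) : ℝ) := Nat.cast_le.2 (aux_grass_mul_le m s hsm)
        _ = (q:ℝ)^(m*s) := by push_cast; ring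
    have h4P : (q:ℝ)^(s*s) ≤ 4 * P := aux_pow_sq_le_four_mul_prod hq s
    have hPpos : 0 < P := by nlinarith [pow_pos hq0 (s*s)]
    have hGbound : (G:ℝ) * (q:ℝ)^(s*s) ≤ 4 * (q:ℝ)^(m*s) := by
      have hGnn : (0:ℝ) ≤ G := Nat.cast_nonneg _
      nlinarith
    obtain ⟨e, he1, he2⟩ : ∃ e, m + n = (r-1) + s + e ∧ 1 ≤ e := ⟨m+n-(r-1)-s, by omega, by omega⟩
    obtain ⟨a, ha⟩ : ∃ a, r - 1 = s + a := ⟨r-1-s, by omega⟩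
    have hnat : q^((m+n)*s + (r-1)*(r-1)) * 2^(r-1-s) ≤ q^((m+n)*(r-1) + s*s) := by
      have h2q : 2^(r-1-s) ≤ q^((r-1-s)*e) := by
        calc 2^(r-1-s) ≤ 2^((r-1-s)*e) := Nat.pow_le_pow_right (by norm_num) (by nlinarith)
          _ ≤ q^((r-1-s)*e) := Nat.pow_le_pow_left hq _
      calc q^((m+n)*s + (r-1)*(r-1)) * 2^(r-1-s)
          ≤ q^((m+n)*s + (r-1)*(r-1)) * q^((r-1-s)*e) := Nat.mul_le_mul_left _ h2q
        _ = q^((m+n)*s + (r-1)*(r-1) + (r-1-s)*e) := by rw [← pow_add]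
        _ = q^((m+n)*(r-1) + s*s) := by
            congr 1
            rw [he1, ha]
            have hras : s + a - s = a := by omega
            rw [hras]
            ring
    have hreal : (q:ℝ)^((m+n)*s) * (q:ℝ)^((r-1)*(r-1)) * 2^(r-1-s) ≤
        (q:ℝ)^((m+n)*(r-1)) * (q:ℝ)^(s*s) := by
      have hc := (Nat.cast_le (α := ℝ)).2 hnat
      push_cast at hc
      calc (q:ℝ)^((m+n)*s) * (q:ℝ)^((r-1)*(r-1)) * 2^(r-1-s)
          = (q:ℝ)^((m+n)*s + (r-1)*(r-1)) * 2^(r-1-s) := by rw [pow_add]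
        _ ≤ (q:ℝ)^((m+n)*(r-1) + s*s) := hc
        _ = (q:ℝ)^((m+n)*(r-1)) * (q:ℝ)^(s*s) := by rw [pow_add]
    have hhalf : (1/2:ℝ)^(r-1-s) = 1/(2:ℝ)^(r-1-s) := by rw [div_pow, one_pow]
    have hRHS : 4 * (q:ℝ)^((m+n)*(r-1)) / (q:ℝ)^((r-1)*(r-1)) * (1/2:ℝ)^(r-1-s) =
        4 * (q:ℝ)^((m+n)*(r-1)) / ((q:ℝ)^((r-1)*(r-1)) * 2^(r-1-s)) := by
      rw [hhalf]; ring
    rw [hRHS, le_div_iff₀ (by positivity)]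
    have key : (G:ℝ) * (q:ℝ)^(s*n) * ((q:ℝ)^((r-1)*(r-1)) * 2^(r-1-s)) * (q:ℝ)^(s*s) ≤
        (4 * (q:ℝ)^((m+n)*(r-1))) * (q:ℝ)^(s*s) := by
      calc (G:ℝ) * (q:ℝ)^(s*n) * ((q:ℝ)^((r-1)*(r-1)) * 2^(r-1-s)) * (q:ℝ)^(s*s)
          = ((G:ℝ) * (q:ℝ)^(s*s)) * ((q:ℝ)^(s*n) * ((q:ℝ)^((r-1)*(r-1)) * 2^(r-1-s))) := by
            ring
        _ ≤ (4 * (q:ℝ)^(m*s)) * ((q:ℝ)^(s*n) * ((q:ℝ)^((r-1)*(r-1)) * 2^(r-1-s))) := by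
            apply mul_le_mul_of_nonneg_right hGbound (by positivity)
        _ = 4 * ((q:ℝ)^((m+n)*s) * (q:ℝ)^((r-1)*(r-1)) * 2^(r-1-s)) := by
            rw [show (m+n)*s = m*s + s*n from by ring, pow_add]; ring
        _ ≤ 4 * ((q:ℝ)^((m+n)*(r-1)) * (q:ℝ)^(s*s)) := by
            apply mul_le_mul_of_nonneg_left hreal (by norm_num)
        _ = (4 * (q:ℝ)^((m+n)*(r-1))) * (q:ℝ)^(s*s) := by ring
    exact le_of_mul_le_mul_right key (pow_pos hq0 (s*s))
  calc (Nat.card {A : Matrix (Fin m) (Fin n) K // A.rank < r} : ℝ)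
      ≤ ((∑ s : Fin r, Nat.card {W : Submodule K (Fin m → K) // finrank K W = (s:ℕ)} *
          q^((s:ℕ)*n) : ℕ) : ℝ) := Nat.cast_le.2 card_le_target
    _ = ∑ s : Fin r, (Nat.card {W : Submodule K (Fin m → K) // finrank K W = (s:ℕ)} : ℝ)
          * (q:ℝ)^((s:ℕ)*n) := by push_cast; rfl
    _ ≤ ∑ s : Fin r, 4 * (q:ℝ)^((m+n)*(r-1)) / (q:ℝ)^((r-1)*(r-1)) * (1/2:ℝ)^(r-1-(s:ℕ)) := by
        apply Finset.sum_le_sum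
        intro s _
        exact term_bound (s:ℕ) (by omega)
    _ = 4 * (q:ℝ)^((m+n)*(r-1)) / (q:ℝ)^((r-1)*(r-1)) *
          ∑ s ∈ Finset.range r, (1/2:ℝ)^(r-1-s) := by
        rw [Finset.mul_sum, Fin.sum_univ_eq_sum_range
          (fun s => 4 * (q:ℝ)^((m+n)*(r-1)) / (q:ℝ)^((r-1)*(r-1)) * (1/2:ℝ)^(r-1-s)) r]
    _ ≤ 4 * (q:ℝ)^((m+n)*(r-1)) / (q:ℝ)^((r-1)*(r-1)) * 2 := by
        apply mul_le_mul_of_nonneg_left _ (by positivity)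
        have hrefl : ∑ s ∈ Finset.range r, ((1:ℝ)/2)^(r-1-s) =
            ∑ j ∈ Finset.range r, ((1:ℝ)/2)^j := by
          rw [← Finset.sum_range_reflect]
          apply Finset.sum_congr rfl
          intro j hj
          rw [Finset.mem_range] at hj
          congr 1
          omega
        rw [hrefl]
        exact sum_geometric_two_le r
    _ = 8 * (q:ℝ)^((m+n)*(r-1)) / (q:ℝ)^((r-1)*(r-1)) := by ring

end Aux
theorem low_rank_probability_bound (q α h ℓ t ε : ℕ)
    (K : Type) [Field K] [Fintype K] (hq : Fintype.card K = q)
    (hα : 2 ≤ α) (hh : 1 ≤ h) (hℓ : 1 ≤ ℓ) (ht : 1 ≤ t) (hhle : h ≤ α * ℓ + ε) :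
    (Nat.card {A : Matrix (Fin (α * ℓ * t)) (Fin (h * t)) K // A.rank < (h - ε) * t} : ℝ) /
        (q : ℝ) ^ (α * ℓ * h * t ^ 2) ≤
      2 * 4 * (q : ℝ) ^
        ((((h : ℤ) - α * ℓ - ε) * ε * t ^ 2 + ((h : ℤ) - α * ℓ - 2 * ε) * t - 1)) := by
  have hq2 : 2 ≤ q := hq ▸ Fintype.one_lt_card
  have hq0 : (0:ℝ) < (q:ℝ) := by positivity
  have hqne : (q:ℝ) ≠ 0 := ne_of_gt hq0
  by_cases hεh : h ≤ ε
  · have hzero : (h - ε) * t = 0 := by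
      rw [Nat.sub_eq_zero_of_le hεh, zero_mul]
    have hempty : IsEmpty {A : Matrix (Fin (α * ℓ * t)) (Fin (h * t)) K //
        A.rank < (h - ε) * t} := ⟨fun A => by have := A.2; omega⟩
    rw [Nat.card_of_isEmpty]
    rw [Nat.cast_zero, zero_div]
    positivity
  · push_neg at hεh
    set m := α * ℓ * t with hm
    set n := h * t with hn
    set r := (h - ε) * t with hr0
    have hr : 1 ≤ r := by
      have : 1 ≤ h - ε := by omega
      calc 1 = 1 * 1 := by norm_num
        _ ≤ (h - ε) * t := Nat.mul_le_mul this ht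
    have hrm : r ≤ m := by
      have h1 : h - ε ≤ α * ℓ := by omega
      exact Nat.mul_le_mul_right t h1
    have hmn : 2 * r ≤ m + n + 1 := by
      have h1 : 2 * (h - ε) ≤ α * ℓ + h := by omega
      calc 2 * r = (2 * (h - ε)) * t := by rw [hr0]; ring
        _ ≤ (α * ℓ + h) * t := Nat.mul_le_mul_right t h1
        _ = m + n := by rw [hm, hn]; ring
        _ ≤ m + n + 1 := Nat.le_succ _
    have hbound := aux_count_bound (K := K) m n r hr hrm hmn
    rw [hq] at hbound
    have hD : (0:ℝ) < (q:ℝ) ^ (α * ℓ * h * t ^ 2) := by positivity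
    have step : (Nat.card {A : Matrix (Fin m) (Fin n) K // A.rank < r} : ℝ) /
        (q : ℝ) ^ (α * ℓ * h * t ^ 2) ≤
        (8 * (q:ℝ)^((m+n)*(r-1)) / (q:ℝ)^((r-1)*(r-1))) / (q : ℝ) ^ (α * ℓ * h * t ^ 2) := by
      gcongr
    refine step.trans (le_of_eq ?_)
    -- now pure computation with zpow
    have hr1 : ((r - 1 : ℕ) : ℤ) = ((h:ℤ) - ε) * t - 1 := by
      rw [Nat.cast_sub hr, hr0, Nat.cast_mul, Nat.cast_sub hεh.le]
      push_cast
      ring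
    have hexp : ((((m+n)*(r-1)) : ℕ) : ℤ) - ((((r-1)*(r-1) + α*ℓ*h*t^2) : ℕ) : ℤ) =
        (((h : ℤ) - α * ℓ - ε) * ε * t ^ 2 + ((h : ℤ) - α * ℓ - 2 * ε) * t - 1) := by
      rw [hm, hn]
      push_cast
      rw [hr1]
      push_cast [Nat.cast_sub hεh.le] at hr1 ⊢
      ring
    calc (8 * (q:ℝ)^((m+n)*(r-1)) / (q:ℝ)^((r-1)*(r-1))) / (q : ℝ) ^ (α * ℓ * h * t ^ 2)
        = 8 * ((q:ℝ)^((m+n)*(r-1)) / (q:ℝ)^((r-1)*(r-1) + α*ℓ*h*t^2)) := by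
          rw [pow_add]; ring
      _ = 8 * (q:ℝ)^(((((m+n)*(r-1)) : ℕ) : ℤ) - ((((r-1)*(r-1) + α*ℓ*h*t^2) : ℕ) : ℤ)) := by
          rw [zpow_sub₀ hqne, zpow_natCast, zpow_natCast]
      _ = 2 * 4 * (q : ℝ) ^
          (((h : ℤ) - α * ℓ - ε) * ε * t ^ 2 + ((h : ℤ) - α * ℓ - 2 * ε) * t - 1) := by
          rw [hexp]; norm_num
end

section
/- Let E_1, …, E_k be events in a finite probability space, each occurring with probability at most p, and such that each E_i is mutually independent of all but at most d of the other events. If e·p·(d+1) ≤ 1 (where e is Euler's number), then the probability that none of the events occurs is positive. -/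
open Finset in
/-- The symmetric Lovász Local Lemma, in a finite probability space given by a
probability mass function `P` on a finite type `Ω`. -/
theorem lovasz_local_lemma (Ω : Type) [Fintype Ω] [DecidableEq Ω]
    (P : Ω → ℝ) (hP0 : ∀ ω, 0 ≤ P ω) (hP1 : ∑ ω, P ω = 1)
    (k : ℕ) (E : Fin k → Finset Ω) (p : ℝ) (d : ℕ)
    (hp : ∀ i, ∑ ω ∈ E i, P ω ≤ p)
    (D : Fin k → Finset (Fin k)) (hD : ∀ i, (D i).card ≤ d)
    (hindep : ∀ i : Fin k, ∀ S : Finset (Fin k),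
      (∀ j ∈ S, j ∉ D i ∧ j ≠ i) →
      ∑ ω ∈ E i ∩ S.inf (fun j => (E j)ᶜ), P ω =
        (∑ ω ∈ E i, P ω) * ∑ ω ∈ S.inf (fun j => (E j)ᶜ), P ω)
    (hepd : Real.exp 1 * p * (d + 1) ≤ 1) :
    0 < ∑ ω ∈ Finset.univ.filter (fun ω => ∀ i, ω ∉ E i), P ω := by
  classical
  set x : ℝ := 1 / (d + 2) with hxdef
  have hdnn : (0:ℝ) ≤ d := Nat.cast_nonneg d
  have hc0 : (0:ℝ) < d + 1 := by positivity
  have hc1 : (0:ℝ) < d + 2 := by positivity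
  have hx0 : 0 < x := by positivity
  have hx1 : x < 1 := by
    rw [hxdef, div_lt_one hc1]; linarith
  have h1x0 : 0 < 1 - x := by linarith
  have h1x1 : 1 - x ≤ 1 := by linarith
  have hexp : (0:ℝ) < Real.exp 1 := Real.exp_pos 1
  -- the key analytic inequality : p ≤ x * (1-x)^d
  have hpx : p ≤ x * (1 - x) ^ d := by
    have h1 : (1:ℝ) + 1 / (d + 1) ≤ Real.exp (1 / (d + 1)) := by
      have := Real.add_one_le_exp (1 / ((d:ℝ) + 1)); linarith
    have h2 : ((1:ℝ) + 1 / (d + 1)) ^ (d + 1) ≤ Real.exp 1 := by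
      calc ((1:ℝ) + 1 / (d + 1)) ^ (d + 1) ≤ Real.exp (1 / (d + 1)) ^ (d + 1) := by
            apply pow_le_pow_left₀ (by positivity) h1 _
        _ = Real.exp (((d:ℕ) + 1 : ℕ) * (1 / (d + 1))) := by
            rw [Real.exp_nat_mul]
        _ = Real.exp 1 := by
            congr 1
            push_cast
            field_simp
    have h3 : ((d:ℝ) + 2) ^ (d + 1) ≤ Real.exp 1 * ((d:ℝ) + 1) ^ (d + 1) := by
      have heq : ((d:ℝ) + 2) = ((d:ℝ) + 1) * (1 + 1 / (d + 1)) := by field_simp; ring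
      rw [heq, mul_pow]
      calc ((d:ℝ) + 1) ^ (d + 1) * (1 + 1 / (d + 1)) ^ (d + 1)
          ≤ ((d:ℝ) + 1) ^ (d + 1) * Real.exp 1 := by
            apply mul_le_mul_of_nonneg_left h2 (by positivity)
        _ = Real.exp 1 * ((d:ℝ) + 1) ^ (d + 1) := by ring
    -- p ≤ 1 / (e * (d+1))
    have hple : p ≤ 1 / (Real.exp 1 * (d + 1)) := by
      rw [le_div_iff₀ (by positivity)]
      calc p * (Real.exp 1 * (d + 1)) = Real.exp 1 * p * (d + 1) := by ring
        _ ≤ 1 := hepd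
    -- x * (1-x)^d = (d+1)^d / (d+2)^(d+1)
    have hxval : x * (1 - x) ^ d = ((d:ℝ) + 1) ^ d / ((d:ℝ) + 2) ^ (d + 1) := by
      have h1x : (1 - x) = ((d:ℝ) + 1) / ((d:ℝ) + 2) := by
        rw [hxdef]; field_simp; ring
      rw [hxdef, h1x, div_pow, pow_succ]
      field_simp
    rw [hxval, le_div_iff₀ (by positivity)]
    calc p * ((d:ℝ) + 2) ^ (d + 1)
        ≤ (1 / (Real.exp 1 * (d + 1))) * (Real.exp 1 * ((d:ℝ) + 1) ^ (d + 1)) := by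
          apply mul_le_mul hple h3 (by positivity) (by positivity)
      _ = ((d:ℝ) + 1) ^ d := by
          rw [pow_succ]
          field_simp
  have hpx' : p ≤ x := le_trans hpx (by
    calc x * (1 - x) ^ d ≤ x * 1 := by
          apply mul_le_mul_of_nonneg_left (pow_le_one₀ (le_of_lt h1x0) h1x1) (le_of_lt hx0)
      _ = x := mul_one x)
  -- measure basics
  have μnonneg : ∀ A : Finset Ω, 0 ≤ ∑ ω ∈ A, P ω := fun A =>
    Finset.sum_nonneg fun ω _ => hP0 ω
  have μmono : ∀ {A B : Finset Ω}, A ⊆ B → ∑ ω ∈ A, P ω ≤ ∑ ω ∈ B, P ω := fun h =>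
    Finset.sum_le_sum_of_subset_of_nonneg h (fun ω _ _ => hP0 ω)
  have μsplit : ∀ A B : Finset Ω,
      ∑ ω ∈ B, P ω = (∑ ω ∈ A ∩ B, P ω) + ∑ ω ∈ Aᶜ ∩ B, P ω := by
    intro A B
    have h1 : A ∩ B = B.filter (· ∈ A) := by ext ω; simp [and_comm]
    have h2 : Aᶜ ∩ B = B.filter (· ∉ A) := by ext ω; simp [and_comm]
    rw [h1, h2]
    exact (Finset.sum_filter_add_sum_filter_not B (· ∈ A) P).symm
  have Ninsert : ∀ (j : Fin k) (S : Finset (Fin k)),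
      ∑ ω ∈ (insert j S).inf (fun l => (E l)ᶜ), P ω =
        (∑ ω ∈ S.inf (fun l => (E l)ᶜ), P ω) -
          ∑ ω ∈ E j ∩ S.inf (fun l => (E l)ᶜ), P ω := by
    intro j S
    have h : (insert j S).inf (fun l => (E l)ᶜ) = (E j)ᶜ ∩ S.inf (fun l => (E l)ᶜ) := by
      rw [Finset.inf_insert]; rfl
    rw [h]
    have := μsplit (E j) (S.inf (fun l => (E l)ᶜ))
    linarith
  have Nmono : ∀ {S T : Finset (Fin k)}, S ⊆ T →
      ∑ ω ∈ T.inf (fun l => (E l)ᶜ), P ω ≤ ∑ ω ∈ S.inf (fun l => (E l)ᶜ), P ω := by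
    intro S T h
    exact μmono (Finset.inf_mono h)
  -- the key induction
  have key : ∀ n : ℕ, ∀ S : Finset (Fin k), S.card ≤ n → ∀ i, i ∉ S →
      ∑ ω ∈ E i ∩ S.inf (fun j => (E j)ᶜ), P ω ≤
        x * ∑ ω ∈ S.inf (fun j => (E j)ᶜ), P ω := by
    intro n
    induction n with
    | zero =>
      intro S hS i _
      rw [Finset.card_eq_zero.mp (Nat.le_zero.mp hS)]
      rw [Finset.inf_empty, Finset.top_eq_univ, Finset.inter_univ]
      rw [show (Finset.univ : Finset Ω) = (∅ : Finset (Fin k)).inf (fun j => (E j)ᶜ) by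
        rw [Finset.inf_empty, Finset.top_eq_univ]]
      rw [Finset.inf_empty, Finset.top_eq_univ, hP1, mul_one]
      exact le_trans (hp i) hpx'
    | succ n ih =>
      intro S hS i hi
      set S₂ := S \ D i with hS₂def
      have hS₂sub : S₂ ⊆ S := Finset.sdiff_subset
      have hind : ∑ ω ∈ E i ∩ S₂.inf (fun j => (E j)ᶜ), P ω =
          (∑ ω ∈ E i, P ω) * ∑ ω ∈ S₂.inf (fun j => (E j)ᶜ), P ω := by
        apply hindep i S₂
        intro j hj
        rcases Finset.mem_sdiff.mp hj with ⟨hjS, hjD⟩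
        exact ⟨hjD, fun hji => hi (hji ▸ hjS)⟩
      -- building up from S₂ to S one element of S ∩ D i at a time
      have build : ∀ A : Finset (Fin k), A ⊆ S ∩ D i →
          (1 - x) ^ A.card * (∑ ω ∈ S₂.inf (fun j => (E j)ᶜ), P ω) ≤
            ∑ ω ∈ (S₂ ∪ A).inf (fun j => (E j)ᶜ), P ω := by
        intro A
        induction A using Finset.cons_induction with
        | empty => intro _; simp
        | cons j A hj ihA =>
          intro hsub
          have hjm : j ∈ S ∩ D i := hsub (Finset.mem_cons_self j A)
          have hAsub : A ⊆ S ∩ D i := fun a ha => hsub (Finset.mem_cons.mpr (Or.inr ha))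
          have hjS : j ∈ S := (Finset.mem_inter.mp hjm).1
          have hjD : j ∈ D i := (Finset.mem_inter.mp hjm).2
          have hjnot : j ∉ S₂ ∪ A := by
            intro hmem
            rcases Finset.mem_union.mp hmem with h | h
            · exact (Finset.mem_sdiff.mp h).2 hjD
            · exact hj h
          have hcard : (S₂ ∪ A).card ≤ n := by
            have hsub2 : S₂ ∪ A ⊆ S.erase j := by
              intro a ha
              rcases Finset.mem_union.mp ha with h | h
              · exact Finset.mem_erase.mpr ⟨fun he => (Finset.mem_sdiff.mp h).2 (he ▸ hjD),
                  (Finset.mem_sdiff.mp h).1⟩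
              · exact Finset.mem_erase.mpr ⟨fun he => hj (he ▸ h), (Finset.mem_inter.mp (hAsub h)).1⟩
            calc (S₂ ∪ A).card ≤ (S.erase j).card := Finset.card_le_card hsub2
              _ = S.card - 1 := Finset.card_erase_of_mem hjS
              _ ≤ n := by omega
          have hkey := ih (S₂ ∪ A) hcard j hjnot
          have heq : S₂ ∪ (Finset.cons j A hj) = insert j (S₂ ∪ A) := by
            rw [Finset.cons_eq_insert, Finset.union_insert]
          rw [heq, Ninsert j (S₂ ∪ A), Finset.card_cons, pow_succ]
          have hA := ihA hAsub
          have hN2 := μnonneg ((S₂ ∪ A).inf (fun l => (E l)ᶜ))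
          calc (1 - x) ^ A.card * (1 - x) * (∑ ω ∈ S₂.inf (fun l => (E l)ᶜ), P ω)
              = (1 - x) * ((1 - x) ^ A.card * ∑ ω ∈ S₂.inf (fun l => (E l)ᶜ), P ω) := by ring
            _ ≤ (1 - x) * ∑ ω ∈ (S₂ ∪ A).inf (fun l => (E l)ᶜ), P ω := by
                apply mul_le_mul_of_nonneg_left hA (le_of_lt h1x0)
            _ ≤ (∑ ω ∈ (S₂ ∪ A).inf (fun l => (E l)ᶜ), P ω) -
                  ∑ ω ∈ E j ∩ (S₂ ∪ A).inf (fun l => (E l)ᶜ), P ω := by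
                nlinarith [hkey]
      have hunion : S₂ ∪ (S ∩ D i) = S := Finset.sdiff_union_inter S (D i)
      have hcardS₁ : (S ∩ D i).card ≤ d :=
        le_trans (Finset.card_le_card Finset.inter_subset_right) (hD i)
      have hbuild := build (S ∩ D i) (le_refl _)
      rw [hunion] at hbuild
      have hN2nn := μnonneg (S₂.inf (fun l => (E l)ᶜ))
      calc ∑ ω ∈ E i ∩ S.inf (fun j => (E j)ᶜ), P ω
          ≤ ∑ ω ∈ E i ∩ S₂.inf (fun j => (E j)ᶜ), P ω := by
            apply μmono
            exact Finset.inter_subset_inter (subset_refl _) (Finset.le_iff_subset.mp (Finset.inf_mono hS₂sub))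
        _ = (∑ ω ∈ E i, P ω) * ∑ ω ∈ S₂.inf (fun j => (E j)ᶜ), P ω := hind
        _ ≤ p * ∑ ω ∈ S₂.inf (fun j => (E j)ᶜ), P ω :=
            mul_le_mul_of_nonneg_right (hp i) hN2nn
        _ ≤ (x * (1 - x) ^ d) * ∑ ω ∈ S₂.inf (fun j => (E j)ᶜ), P ω :=
            mul_le_mul_of_nonneg_right hpx hN2nn
        _ ≤ (x * (1 - x) ^ (S ∩ D i).card) * ∑ ω ∈ S₂.inf (fun j => (E j)ᶜ), P ω := by
            apply mul_le_mul_of_nonneg_right _ hN2nn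
            apply mul_le_mul_of_nonneg_left _ (le_of_lt hx0)
            exact pow_le_pow_of_le_one (le_of_lt h1x0) h1x1 hcardS₁
        _ = x * ((1 - x) ^ (S ∩ D i).card * ∑ ω ∈ S₂.inf (fun j => (E j)ᶜ), P ω) := by ring
        _ ≤ x * ∑ ω ∈ S.inf (fun j => (E j)ᶜ), P ω :=
            mul_le_mul_of_nonneg_left hbuild (le_of_lt hx0)
  -- lower bound : N S ≥ (1-x)^|S|
  have lower : ∀ S : Finset (Fin k),
      (1 - x) ^ S.card ≤ ∑ ω ∈ S.inf (fun j => (E j)ᶜ), P ω := by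
    intro S
    induction S using Finset.cons_induction with
    | empty => simp [Finset.inf_empty, Finset.top_eq_univ, hP1]
    | cons j S hj ihS =>
      have hkey := key S.card S (le_refl _) j hj
      rw [Finset.cons_eq_insert, Ninsert j S, Finset.card_insert_of_notMem hj, pow_succ]
      nlinarith [ihS, μnonneg (S.inf (fun l => (E l)ᶜ))]
  have hfinal := lower Finset.univ
  have hgoal : Finset.univ.filter (fun ω => ∀ i, ω ∉ E i) =
      (Finset.univ : Finset (Fin k)).inf (fun j => (E j)ᶜ) := by
    ext ω
    simp [Finset.mem_inf]
  rw [hgoal]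
  calc (0:ℝ) < (1 - x) ^ (Finset.univ : Finset (Fin k)).card := pow_pos h1x0 _
    _ ≤ _ := hfinal
end

section
/- Let C be a linear rank-metric code of m × n matrices over F_q with minimum rank distance δ and |C| = q^{max(m,n)(min(m,n)-δ+1)} (an MRD code). Then the lifted code C^lift = { rowspace[I_m | A] : A ∈ C } is a set of m-dimensional subspaces of F_q^{m+n} of size |C| such that any two distinct members U, V satisfy dim(U ∩ V) ≤ m - δ. -/
open Matrix


/-- The lifting of an `m × n` matrix `A`: the row space of `[I_m | A]`
inside `F_q^{m+n}` (indexed by `Fin m ⊕ Fin n`). -/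
noncomputable def matrixLift {K : Type} [Field K] {m n : ℕ}
    (A : Matrix (Fin m) (Fin n) K) : Submodule K (Fin m ⊕ Fin n → K) :=
  LinearMap.range (Matrix.vecMulLinear
    (Matrix.fromCols (1 : Matrix (Fin m) (Fin m) K) A))

lemma matrixLift_apply {K : Type} [Field K] {m n : ℕ}
    (A : Matrix (Fin m) (Fin n) K) (x : Fin m → K) :
    Matrix.vecMulLinear (Matrix.fromCols (1 : Matrix (Fin m) (Fin m) K) A) x
      = Sum.elim x (x ᵥ* A) := by
  simp [Matrix.vecMulLinear_apply, Matrix.vecMul_fromCols, Matrix.vecMul_one]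

lemma matrixLift_inj {K : Type} [Field K] {m n : ℕ}
    (A : Matrix (Fin m) (Fin n) K) :
    Function.Injective
      (Matrix.vecMulLinear (Matrix.fromCols (1 : Matrix (Fin m) (Fin m) K) A)) := by
  intro x y h
  rw [matrixLift_apply, matrixLift_apply] at h
  ext i
  exact congrFun h (Sum.inl i)

theorem lifted_MRD_code (q m n δ : ℕ)
    (K : Type) [Field K] [Fintype K] (hq : Fintype.card K = q)
    (hm : 1 ≤ m) (hn : 1 ≤ n) (hδ1 : 1 ≤ δ) (hδ : δ ≤ min m n)
    (C : Submodule K (Matrix (Fin m) (Fin n) K))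
    (hdist : ∀ A ∈ C, ∀ B ∈ C, A ≠ B → δ ≤ (A - B).rank)
    (hcard : Nat.card C = q ^ (max m n * (min m n - δ + 1))) :
    (∀ A ∈ C, Module.finrank K (matrixLift A) = m) ∧
    (∀ A ∈ C, ∀ B ∈ C, A ≠ B →
      matrixLift A ≠ matrixLift B ∧
      Module.finrank K ↥(matrixLift A ⊓ matrixLift B) ≤ m - δ) := by
  have hrank : ∀ A : Matrix (Fin m) (Fin n) K, Module.finrank K (matrixLift A) = m := by
    intro A
    rw [matrixLift, LinearMap.finrank_range_of_inj (matrixLift_inj A)]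
    simp
  refine ⟨fun A _ => hrank A, fun A hA B hB hAB => ?_⟩
  -- the projection onto the first m coordinates
  set p : (Fin m ⊕ Fin n → K) →ₗ[K] (Fin m → K) := LinearMap.funLeft K K Sum.inl with hp
  have hpapply : ∀ (M : Matrix (Fin m) (Fin n) K) (x : Fin m → K),
      p (Matrix.vecMulLinear (Matrix.fromCols (1 : Matrix (Fin m) (Fin m) K) M) x) = x := by
    intro M x
    ext i
    rw [matrixLift_apply]
    rfl
  -- map the intersection into the kernel of vecMulLinear (A - B)
  have hmem : ∀ v ∈ (matrixLift A ⊓ matrixLift B),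
      p v ∈ LinearMap.ker (Matrix.vecMulLinear (A - B)) := by
    rintro v ⟨hvA, hvB⟩
    obtain ⟨x, hx⟩ := LinearMap.mem_range.mp hvA
    obtain ⟨y, hy⟩ := LinearMap.mem_range.mp hvB
    have hxv : p v = x := by rw [← hx, hpapply]
    have hyv : p v = y := by rw [← hy, hpapply]
    have hxy : x = y := by rw [← hxv, hyv]
    have hAB' : x ᵥ* A = x ᵥ* B := by
      have : Sum.elim x (x ᵥ* A) = Sum.elim y (y ᵥ* B) := by
        rw [← matrixLift_apply, ← matrixLift_apply, hx, hy]
      subst hxy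
      ext j
      exact congrFun this (Sum.inr j)
    rw [LinearMap.mem_ker, hxv, Matrix.vecMulLinear_apply, Matrix.vecMul_sub, hAB',
      sub_self]
  set φ : ↥(matrixLift A ⊓ matrixLift B) →ₗ[K]
      ↥(LinearMap.ker (Matrix.vecMulLinear (A - B))) :=
    LinearMap.codRestrict _ (p ∘ₗ (matrixLift A ⊓ matrixLift B).subtype)
      (fun v => hmem v v.2) with hφ
  have hφinj : Function.Injective φ := by
    intro v w h
    have h' : p v.1 = p w.1 := congrArg Subtype.val h
    obtain ⟨x, hx⟩ := LinearMap.mem_range.mp v.2.1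
    obtain ⟨y, hy⟩ := LinearMap.mem_range.mp w.2.1
    have hxv : p v.1 = x := by rw [← hx, hpapply]
    have hyv : p w.1 = y := by rw [← hy, hpapply]
    have : x = y := by rw [← hxv, h', hyv]
    apply Subtype.ext
    rw [← hx, ← hy, this]
  have hle : Module.finrank K ↥(matrixLift A ⊓ matrixLift B)
      ≤ Module.finrank K ↥(LinearMap.ker (Matrix.vecMulLinear (A - B))) :=
    LinearMap.finrank_le_finrank_of_injective (f := φ) hφinj
  -- compute the kernel dimension
  have hvm : Matrix.vecMulLinear (A - B) = Matrix.mulVecLin (A - B)ᵀ := by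
    ext x j
    simp [Matrix.vecMulLinear_apply, Matrix.mulVecLin_apply, Matrix.mulVec_transpose]
  have hrn := LinearMap.finrank_range_add_finrank_ker (Matrix.mulVecLin (A - B)ᵀ)
  have hrange : Module.finrank K ↥(LinearMap.range (Matrix.mulVecLin (A - B)ᵀ))
      = (A - B).rank := by
    rw [← Matrix.rank_transpose (A - B)]
    rfl
  have hdom : Module.finrank K (Fin m → K) = m := by simp
  have hδr : δ ≤ (A - B).rank := hdist A hA B hB hAB
  have hker : Module.finrank K ↥(LinearMap.ker (Matrix.vecMulLinear (A - B))) ≤ m - δ := by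
    rw [hvm]
    omega
  have hdim : Module.finrank K ↥(matrixLift A ⊓ matrixLift B) ≤ m - δ := hle.trans hker
  refine ⟨?_, hdim⟩
  intro hEq
  have h1 : Module.finrank K ↥(matrixLift A ⊓ matrixLift B) = m := by
    rw [hEq, inf_idem, hrank B]
  omega
end

section
/- Let n, k, δ, α be positive integers with 1 ≤ δ ≤ k, δ + k ≤ n, and α ≥ 2. Then there exists an α-(n, k, δ)_q covering Grassmannian code of size at least (α-1) · q^{max(k, n-k)(min(k, n-k) - δ + 1)}. -/
open Matrix Submodule Module

section Aux

variable {K : Type} [Field K] {k r : ℕ}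

/-- The "lifting" map `x ↦ (x, x ⬝ A)`. -/
noncomputable def liftMap (A : Matrix (Fin k) (Fin r) K) :
    (Fin k → K) →ₗ[K] (Fin k → K) × (Fin r → K) :=
  LinearMap.prod LinearMap.id A.vecMulLinear

lemma liftMap_apply (A : Matrix (Fin k) (Fin r) K) (x : Fin k → K) :
    liftMap A x = (x, Matrix.vecMul x A) := rfl

lemma liftMap_inj (A : Matrix (Fin k) (Fin r) K) : Function.Injective (liftMap A) :=
  fun _ _ h => congrArg Prod.fst h

lemma finrank_range_liftMap (A : Matrix (Fin k) (Fin r) K) :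
    finrank K (LinearMap.range (liftMap A)) = k := by
  rw [LinearMap.finrank_range_of_inj (liftMap_inj A), Module.finrank_fin_fun]

lemma finrank_range_vecMulLinear (M : Matrix (Fin k) (Fin r) K) :
    finrank K (LinearMap.range M.vecMulLinear) = M.rank := by
  rw [← Matrix.mulVecLin_transpose, ← Matrix.rank_transpose M]
  rfl

lemma finrank_sup_range_liftMap (A B : Matrix (Fin k) (Fin r) K) :
    k + (A - B).rank ≤
      finrank K ↥(LinearMap.range (liftMap A) ⊔ LinearMap.range (liftMap B)) := by
  set W : Submodule K ((Fin k → K) × (Fin r → K)) :=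
    Submodule.map (LinearMap.inr K (Fin k → K) (Fin r → K))
      (LinearMap.range (A - B).vecMulLinear) with hWdef
  have hWle : W ≤ LinearMap.range (liftMap A) ⊔ LinearMap.range (liftMap B) := by
    rintro _ ⟨_, ⟨x, rfl⟩, rfl⟩
    have heq : (LinearMap.inr K (Fin k → K) (Fin r → K)) ((A - B).vecMulLinear x)
        = liftMap A x - liftMap B x := by
      simp [liftMap_apply, Matrix.vecMulLinear_apply, Matrix.vecMul_sub, Prod.ext_iff]
    rw [heq]
    exact sub_mem (Submodule.mem_sup_left ⟨x, rfl⟩) (Submodule.mem_sup_right ⟨x, rfl⟩)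
  have hinf : LinearMap.range (liftMap A) ⊓ W = ⊥ := by
    rw [eq_bot_iff]
    rintro z ⟨⟨x, rfl⟩, hzW⟩
    obtain ⟨w, -, hz⟩ := hzW
    have hx : x = 0 := by
      have h1 := congrArg Prod.fst hz
      simpa [liftMap_apply] using h1.symm
    simp [hx, Submodule.mem_bot, liftMap_apply, Matrix.vecMul]
  have hWrank : finrank K ↥W = (A - B).rank := by
    rw [hWdef, ← (Submodule.equivMapOfInjective _ LinearMap.inr_injective
      (LinearMap.range (A - B).vecMulLinear)).finrank_eq]
    exact finrank_range_vecMulLinear _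
  calc k + (A - B).rank
      = finrank K ↥(LinearMap.range (liftMap A)) + finrank K ↥W := by
        rw [finrank_range_liftMap, hWrank]
    _ = finrank K ↥(LinearMap.range (liftMap A) ⊔ W) := by
        rw [← Submodule.finrank_sup_add_finrank_inf_eq, hinf, finrank_bot, add_zero]
    _ ≤ _ := Submodule.finrank_mono (sup_le le_sup_left hWle)

end Aux

theorem covering_grassmannian_code_existence (q n k δ α : ℕ)
    (K : Type) [Field K] [Fintype K] (hq : Fintype.card K = q)
    (hδ1 : 1 ≤ δ) (hδk : δ ≤ k) (hkn : δ + k ≤ n) (hα : 2 ≤ α)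
    (hMRD : ∀ m n' : ℕ, 1 ≤ m → 1 ≤ n' → δ ≤ min m n' →
      ∃ C : Submodule K (Matrix (Fin m) (Fin n') K),
        (∀ A ∈ C, ∀ B ∈ C, A ≠ B → δ ≤ (A - B).rank) ∧
        Nat.card C = q ^ (max m n' * (min m n' - δ + 1))) :
    ∃ C : Multiset (Submodule K (Fin n → K)),
      (∀ W ∈ C, Module.finrank K W = k) ∧
      (∀ M : Multiset (Submodule K (Fin n → K)), M ≤ C → Multiset.card M = α →
        δ + k ≤ Module.finrank K M.sum) ∧
      (α - 1) * q ^ (max k (n - k) * (min k (n - k) - δ + 1)) ≤ Multiset.card C := by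
  classical
  set r := n - k with hr
  have hk1 : 1 ≤ k := le_trans hδ1 hδk
  have hδr : δ ≤ r := by omega
  obtain ⟨C₀, hC₀d, hC₀card⟩ := hMRD k r hk1 (le_trans hδ1 hδr) (le_min hδk hδr)
  have hfr : finrank K ((Fin k → K) × (Fin r → K)) = finrank K (Fin n → K) := by
    simp only [Module.finrank_prod, Module.finrank_fin_fun]
    omega
  let e : ((Fin k → K) × (Fin r → K)) ≃ₗ[K] (Fin n → K) :=
    LinearEquiv.ofFinrankEq _ _ hfr
  let U : Matrix (Fin k) (Fin r) K → Submodule K (Fin n → K) :=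
    fun A => (LinearMap.range (liftMap A)).map e.toLinearMap
  have hmapfr : ∀ p : Submodule K ((Fin k → K) × (Fin r → K)),
      finrank K ↥(p.map e.toLinearMap) = finrank K ↥p := fun p =>
    ((Submodule.equivMapOfInjective e.toLinearMap e.injective p).finrank_eq).symm
  have hUrank : ∀ A, finrank K ↥(U A) = k := fun A => by
    rw [show U A = (LinearMap.range (liftMap A)).map e.toLinearMap from rfl, hmapfr]
    exact finrank_range_liftMap A
  have hkey : ∀ A ∈ C₀, ∀ B ∈ C₀, A ≠ B → δ + k ≤ finrank K ↥(U A ⊔ U B) := by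
    intro A hA B hB hAB
    have h1 := finrank_sup_range_liftMap A B
    have h2 := hC₀d A hA B hB hAB
    have h3 : U A ⊔ U B
        = (LinearMap.range (liftMap A) ⊔ LinearMap.range (liftMap B)).map e.toLinearMap :=
      (Submodule.map_sup _ _ _).symm
    rw [h3, hmapfr]
    omega
  have hUinj : ∀ A ∈ C₀, ∀ B ∈ C₀, U A = U B → A = B := by
    intro A hA B hB heq
    by_contra hAB
    have h1 := hkey A hA B hB hAB
    rw [heq, sup_idem, hUrank] at h1
    omega
  let S : Finset (Matrix (Fin k) (Fin r) K) := (C₀ : Set _).toFinset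
  let T : Multiset (Submodule K (Fin n → K)) := S.val.map U
  have hmemT : ∀ W ∈ T, ∃ A ∈ C₀, U A = W := by
    intro W hW
    obtain ⟨A, hA, rfl⟩ := Multiset.mem_map.mp hW
    exact ⟨A, by simpa [S, Set.mem_toFinset] using hA, rfl⟩
  refine ⟨(α - 1) • T, ?_, ?_, ?_⟩
  · intro W hW
    obtain ⟨A, -, rfl⟩ := hmemT W (Multiset.mem_nsmul.mp hW).2
    exact hUrank A
  · intro M hM hcard
    have hpos : 0 < Multiset.card M := by omega
    obtain ⟨a, haM⟩ := Multiset.card_pos_iff_exists_mem.mp hpos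
    by_cases hall : ∀ b ∈ M, b = a
    · exfalso
      have hMrep : M = Multiset.replicate α a :=
        Multiset.eq_replicate.mpr ⟨hcard, hall⟩
      have hle := Multiset.count_le_of_le a hM
      rw [hMrep, Multiset.count_replicate_self, Multiset.count_nsmul] at hle
      have hTnodup : T.Nodup := by
        refine Multiset.Nodup.map_on ?_ S.nodup
        intro x hx y hy hxy
        exact hUinj x (by simpa [S, Set.mem_toFinset] using hx)
          y (by simpa [S, Set.mem_toFinset] using hy) hxy
      have hc1 : Multiset.count a T ≤ 1 := Multiset.nodup_iff_count_le_one.mp hTnodup a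
      have h4 : (α - 1) * Multiset.count a T ≤ (α - 1) * 1 :=
        Nat.mul_le_mul_left _ hc1
      rw [Nat.mul_one] at h4
      omega
    · push_neg at hall
      obtain ⟨b, hbM, hba⟩ := hall
      obtain ⟨A, hA, hAa⟩ := hmemT a (Multiset.mem_nsmul.mp (Multiset.mem_of_le hM haM)).2
      obtain ⟨B, hB, hBb⟩ := hmemT b (Multiset.mem_nsmul.mp (Multiset.mem_of_le hM hbM)).2
      have hAB : A ≠ B := fun h => hba (by rw [← hBb, ← hAa, h])
      have hsup : a ⊔ b ≤ M.sum := by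
        obtain ⟨M', rfl⟩ := Multiset.exists_cons_of_mem haM
        have hbM' : b ∈ M' := by
          rcases Multiset.mem_cons.mp hbM with h | h
          · exact absurd h hba
          · exact h
        obtain ⟨M'', rfl⟩ := Multiset.exists_cons_of_mem hbM'
        rw [Multiset.sum_cons, Multiset.sum_cons, Submodule.add_eq_sup,
          Submodule.add_eq_sup]
        exact sup_le le_sup_left (le_sup_of_le_right le_sup_left)
      calc δ + k ≤ finrank K ↥(U A ⊔ U B) := hkey A hA B hB hAB
        _ = finrank K ↥(a ⊔ b) := by rw [hAa, hBb]
        _ ≤ finrank K ↥M.sum := Submodule.finrank_mono hsup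
  · rw [Multiset.card_nsmul]
    have hcT : Multiset.card T = q ^ (max k r * (min k r - δ + 1)) := by
      have h1 : Multiset.card T = S.card := by simp [T]
      have h2 : S.card = Fintype.card ↥(C₀ : Set (Matrix (Fin k) (Fin r) K)) :=
        Set.toFinset_card _
      rw [h1, h2, ← Nat.card_eq_fintype_card]
      exact hC₀card
    rw [hcT]
end

section
/- Let α ≥ 2, h, ℓ, t ≥ 1, ε ≥ 0, h - ε ≥ 2ℓ, and suppose there exists an α-(ht, ℓt, (h-ε-ℓ)t)_q covering Grassmannian code with r codewords. Then r < γ·θ·q^{ℓt(εt+1)} + α - θ, where θ = α - ⌊(h-ε)/ℓ⌋ + 1 and γ = 4. -/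
open Module Finset

set_option maxHeartbeats 4000000

attribute [local instance] Classical.propDecidable

noncomputable local instance subFinGlobal {α : Type} [Fintype α] (p : α → Prop) :
    Fintype {x // p x} := Fintype.ofFinite _



section CardLI
variable {K : Type} [Field K] [Fintype K]



lemma card_li (E : Type) [AddCommGroup E] [Module K E] [Fintype E] [FiniteDimensional K E] (s : ℕ) :
    Fintype.card {v : Fin s → E // LinearIndependent K v} =
      ∏ i ∈ range s, (Fintype.card E - Fintype.card K ^ i) := by
  induction s with
  | zero =>
      rw [Fintype.card_eq_one_iff_nonempty_unique.mpr, range_zero, prod_empty]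
      exact ⟨⟨⟨finZeroElim, linearIndependent_empty_type⟩,
        fun v => Subtype.ext (funext fun i => i.elim0)⟩⟩
  | succ s ih =>
      have e : ((u : {v : Fin s → E // LinearIndependent K v}) ×
            {x : E // x ∉ Submodule.span K (Set.range u.1)}) ≃
            {v : Fin (s+1) → E // LinearIndependent K v} := by
        apply Equiv.ofBijective (f := fun p => ⟨Fin.snoc p.1.1 p.2.1,
          linearIndependent_fin_snoc.mpr ⟨p.1.2, p.2.2⟩⟩)
        constructor
        · rintro ⟨⟨u, hu⟩, x, hx⟩ ⟨⟨u', hu'⟩, x', hx'⟩ hh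
          have h0 : (Fin.snoc u x : Fin (s+1) → E) = Fin.snoc u' x' := congrArg Subtype.val hh
          have h1 : u = u' := by
            have := congrArg Fin.init h0
            rwa [Fin.init_snoc, Fin.init_snoc] at this
          have h2 : x = x' := by
            have := congrArg (fun f => f (Fin.last s)) h0
            simpa [Fin.snoc_last] using this
          subst h1; subst h2; rfl
        · rintro ⟨v, hv⟩
          have h : LinearIndependent K (Fin.snoc (Fin.init v) (v (Fin.last s))) := by
            rw [Fin.snoc_init_self]; exact hv
          rw [linearIndependent_fin_snoc] at h
          exact ⟨⟨⟨Fin.init v, h.1⟩, ⟨v (Fin.last s), h.2⟩⟩,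
            Subtype.ext (Fin.snoc_init_self v)⟩
      rw [← Fintype.card_congr e, Fintype.card_sigma, Finset.prod_range_succ, ← ih]
      have hfib : ∀ u : {v : Fin s → E // LinearIndependent K v},
          Fintype.card {x : E // x ∉ Submodule.span K (Set.range u.1)} =
            Fintype.card E - Fintype.card K ^ s := by
        intro u
        have hsp : Fintype.card {x : E // x ∈ Submodule.span K (Set.range u.1)} =
            Fintype.card K ^ s := by
          have : Fintype.card {x : E // x ∈ Submodule.span K (Set.range u.1)} =
              Fintype.card K ^ finrank K (Submodule.span K (Set.range u.1)) := by
            exact card_eq_pow_finrank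
          rw [this, finrank_span_eq_card u.2, Fintype.card_fin]
        rw [Fintype.card_subtype_compl, hsp]
      rw [Finset.sum_congr rfl (fun u _ => hfib u), Finset.sum_const, smul_eq_mul]
      rfl
end CardLI



section Aux
variable {K V : Type} [Field K] [AddCommGroup V] [Module K V] [FiniteDimensional K V]

lemma finrank_sup_le' (p q : Submodule K V) :
    finrank K (p ⊔ q : Submodule K V) ≤ finrank K p + finrank K q := by
  have := Submodule.finrank_sup_add_finrank_inf_eq p q
  omega

lemma msum_le {P : Submodule K V} (s : Multiset (Submodule K V)) (h : ∀ p ∈ s, p ≤ P) :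
    s.sum ≤ P := by
  induction s using Multiset.induction_on with
  | empty => simpa [Submodule.zero_eq_bot] using bot_le
  | cons a s ih =>
      rw [Multiset.sum_cons, Submodule.add_eq_sup]
      exact sup_le (h a (Multiset.mem_cons_self a s))
        (ih fun p hp => h p (Multiset.mem_cons_of_mem hp))

lemma finrank_msum_le {k : ℕ} (s : Multiset (Submodule K V)) (h : ∀ p ∈ s, finrank K p ≤ k) :
    finrank K s.sum ≤ Multiset.card s * k := by
  induction s using Multiset.induction_on with
  | empty => simp [Submodule.zero_eq_bot]; exact finrank_bot K V
  | cons a s ih =>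
      rw [Multiset.sum_cons, Submodule.add_eq_sup, Multiset.card_cons]
      calc finrank K (a ⊔ s.sum : Submodule K V) ≤ finrank K a + finrank K s.sum :=
            finrank_sup_le' _ _
        _ ≤ k + Multiset.card s * k := by
            exact Nat.add_le_add (h a (Multiset.mem_cons_self a s))
              (ih fun p hp => h p (Multiset.mem_cons_of_mem hp))
        _ = (Multiset.card s + 1) * k := by ring

lemma mexists_le_card {α : Type} (s : Multiset α) (c : ℕ) (h : c ≤ Multiset.card s) :
    ∃ t, t ≤ s ∧ Multiset.card t = c := by
  refine ⟨(s.toList.take c : List α), ?_, ?_⟩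
  · have h1 : (s.toList.take c).Sublist s.toList := List.take_sublist c s.toList
    have := h1.subperm
    rw [← Multiset.coe_le] at this
    simpa [Multiset.coe_toList] using this
  · simp only [Multiset.coe_card, List.length_take]
    rw [Multiset.length_toList]
    omega
end Aux



lemma prod_one_sub_ge (x : ℝ) (h0 : 0 ≤ x) (h2 : x ≤ 1/2) (w : ℕ) :
    1/4 + x^w/2 ≤ ∏ i ∈ range w, (1 - x^(i+1)) := by
  induction w with
  | zero => norm_num
  | succ w ih =>
      have hxp : ∀ j : ℕ, (0:ℝ) ≤ x ^ j := fun j => pow_nonneg h0 j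
      have hxle : ∀ j : ℕ, x ^ (j+1) ≤ 1/2 := by
        intro j
        calc x ^ (j+1) ≤ x ^ 1 := pow_le_pow_of_le_one h0 (by linarith) (by omega)
          _ = x := pow_one x
          _ ≤ 1/2 := h2
      rw [prod_range_succ]
      rcases Nat.eq_zero_or_pos w with hw | hw
      · subst hw; simp; nlinarith [hxp 1]
      · have ha : x ^ w ≤ x := by
          calc x ^ w ≤ x ^ 1 := pow_le_pow_of_le_one h0 (by linarith) (by omega)
            _ = x := pow_one x
        have hfacts : (0:ℝ) ≤ x^w := hxp w
        have h1 : (1/4 + x^w/2) * (1 - x^(w+1)) ≤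
            (∏ i ∈ range w, (1 - x^(i+1))) * (1 - x^(w+1)) := by
          apply mul_le_mul_of_nonneg_right ih
          nlinarith [hxle w]
        refine le_trans ?_ h1
        have hx2 : x^(w+1) = x^w * x := by ring
        have h5 : x^w * x ≤ x^w * (1/2) := mul_le_mul_of_nonneg_left h2 hfacts
        have h7 : x^w * x ≤ 1/4 := by nlinarith
        have h6 : x^w * (x^w * x) ≤ x^w * (1/4) := mul_le_mul_of_nonneg_left h7 hfacts
        nlinarith [hfacts, h0]

lemma prod_pow_sub_one_ge (q : ℝ) (hq : 2 ≤ q) (w : ℕ) :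
    (1/4) * ∏ i ∈ range w, q^(i+1) ≤ ∏ i ∈ range w, (q^(i+1) - 1) := by
  have hq0 : (0:ℝ) < q := by linarith
  have key : ∏ i ∈ range w, (q^(i+1) - 1) =
      (∏ i ∈ range w, q^(i+1)) * ∏ i ∈ range w, (1 - (q⁻¹)^(i+1)) := by
    rw [← prod_mul_distrib]
    apply prod_congr rfl
    intro i _
    have : (q⁻¹)^(i+1) = (q^(i+1))⁻¹ := by rw [inv_pow]
    rw [this]
    field_simp
  rw [key]
  have h1 : (1/4 : ℝ) ≤ ∏ i ∈ range w, (1 - (q⁻¹)^(i+1)) := by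
    have := prod_one_sub_ge q⁻¹ (by positivity) (by
      rw [inv_le_comm₀ hq0 (by norm_num)]; linarith) w
    have h2 : (0:ℝ) ≤ (q⁻¹)^w / 2 := by positivity
    linarith
  have hpos : (0:ℝ) ≤ ∏ i ∈ range w, q^(i+1) := by positivity
  calc (1/4) * ∏ i ∈ range w, q^(i+1) = (∏ i ∈ range w, q^(i+1)) * (1/4) := by ring
    _ ≤ (∏ i ∈ range w, q^(i+1)) * ∏ i ∈ range w, (1 - (q⁻¹)^(i+1)) :=
        mul_le_mul_of_nonneg_left h1 hpos



lemma key_ineq (q : ℝ) (hq : 2 ≤ q) (N k c w s : ℕ) (hw : w ≤ k) (hsN : w + s ≤ N)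
    (hexp : w * N ≤ k * c + w * (w + s)) :
    ∏ i ∈ range (w+s), (q^N - q^i) ≤
      4 * q^(k*c) * ((q^(w*s) * ∏ i ∈ range s, (q^(N-w) - q^i)) *
        (q^(w*s) * ∏ i ∈ range w, (q^w - q^i))) := by
  have hq0 : (0:ℝ) < q := by linarith
  have hq1 : (1:ℝ) ≤ q := by linarith
  have hpow_mono : ∀ {a b : ℕ}, a ≤ b → q^a ≤ q^b := fun {a b} hab =>
    pow_le_pow_right₀ hq1 hab
  have hfac_nonneg : ∀ {M i : ℕ}, i < M → (0:ℝ) ≤ q^M - q^i := fun {M i} hi =>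
    sub_nonneg.mpr (hpow_mono (le_of_lt hi))
  rw [prod_range_add]
  have hstep : ∀ i ∈ range s, q^N - q^(w+i) = q^w * (q^(N-w) - q^i) := by
    intro i hi
    have h1 : w + (N - w) = N := by omega
    rw [mul_sub, ← pow_add, ← pow_add, h1]
  rw [prod_congr rfl hstep, prod_mul_distrib, prod_const, card_range, ← pow_mul]
  have hBnn : (0:ℝ) ≤ q^(w*s) * ∏ i ∈ range s, (q^(N-w) - q^i) := by
    apply mul_nonneg (by positivity)
    apply prod_nonneg
    intro i hi
    simp only [mem_range] at hi
    exact hfac_nonneg (by omega)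
  have hexp' : N * w ≤ k*c + w*s + w*w := by
    have h2 : w * (w + s) = w*w + w*s := Nat.mul_add w w s
    have h3 : w * N = N * w := Nat.mul_comm w N
    omega
  have hmain : ∏ i ∈ range w, (q^N - q^i) ≤
      4 * q^(k*c) * (q^(w*s) * ∏ i ∈ range w, (q^w - q^i)) := by
    have hA : ∏ i ∈ range w, (q^N - q^i) ≤ q^(N*w) := by
      calc ∏ i ∈ range w, (q^N - q^i) ≤ ∏ i ∈ range w, q^N := by
            apply prod_le_prod
            · intro i hi
              simp only [mem_range] at hi
              exact hfac_nonneg (by omega)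
            · intro i _; linarith [pow_pos hq0 i]
        _ = q^(N*w) := by rw [prod_const, card_range, ← pow_mul]
    have hC : (1/4) * q^(w*w) ≤ ∏ i ∈ range w, (q^w - q^i) := by
      have hsplit : ∀ i ∈ range w, q^w - q^i = q^i * (q^(w-i) - 1) := by
        intro i hi
        simp only [mem_range] at hi
        have h1 : i + (w - i) = w := by omega
        rw [mul_sub, mul_one, ← pow_add, h1]
      rw [prod_congr rfl hsplit, prod_mul_distrib]
      have hrefl : ∏ i ∈ range w, ((q:ℝ)^(w-i) - 1) = ∏ i ∈ range w, (q^(i+1) - 1) := by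
        rw [← prod_range_reflect]
        apply prod_congr rfl
        intro i hi
        simp only [mem_range] at hi
        have h1 : w - (w - 1 - i) = i + 1 := by omega
        rw [h1]
      rw [hrefl]
      have h1 := prod_pow_sub_one_ge q hq w
      have h2 : ∏ i ∈ range w, (q:ℝ)^(i+1) = q^(w + ∑ i ∈ range w, i) := by
        rw [prod_pow_eq_pow_sum]
        congr 1
        rw [Finset.sum_add_distrib, Finset.sum_const, card_range, smul_eq_mul, mul_one]
        omega
      have h3 : ∏ i ∈ range w, (q:ℝ)^i = q^(∑ i ∈ range w, i) := by
        rw [prod_pow_eq_pow_sum]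
      rw [h3]
      have hgauss : w + 2 * ∑ i ∈ range w, i = w * w := by
        have h5 := Finset.sum_range_id_mul_two w
        cases w with
        | zero => simp
        | succ n =>
            have h8 : n + 1 - 1 = n := rfl
            rw [h8] at h5
            have h7 : (n+1) * (n+1) = (n+1)*n + (n+1) := by ring
            omega
      calc (1/4) * q^(w*w) = q^(∑ i ∈ range w, i) * ((1/4) * q^(w + ∑ i ∈ range w, i)) := by
            have e1 : (q:ℝ)^(∑ i ∈ range w, i) * ((1/4) * q^(w + ∑ i ∈ range w, i)) =
                1/4 * q^((∑ i ∈ range w, i) + (w + ∑ i ∈ range w, i)) := by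
              rw [pow_add]; ring
            rw [e1, show (∑ i ∈ range w, i) + (w + ∑ i ∈ range w, i) = w * w by omega]
        _ ≤ q^(∑ i ∈ range w, i) * ((1/4) * ∏ i ∈ range w, (q:ℝ)^(i+1)) := by
            rw [h2]
        _ ≤ q^(∑ i ∈ range w, i) * ∏ i ∈ range w, ((q:ℝ)^(i+1) - 1) := by
            apply mul_le_mul_of_nonneg_left h1 (by positivity)
    calc ∏ i ∈ range w, (q^N - q^i) ≤ q^(N*w) := hA
      _ ≤ q^(k*c + w*s + w*w) := hpow_mono hexp'
      _ = 4 * q^(k*c) * (q^(w*s) * ((1/4) * q^(w*w))) := by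
          rw [pow_add, pow_add]; ring
      _ ≤ 4 * q^(k*c) * (q^(w*s) * ∏ i ∈ range w, (q^w - q^i)) := by
          apply mul_le_mul_of_nonneg_left
          · exact mul_le_mul_of_nonneg_left hC (by positivity)
          · positivity
  calc (∏ i ∈ range w, (q^N - q^i)) * (q^(w*s) * ∏ i ∈ range s, (q^(N-w) - q^i))
      ≤ (4 * q^(k*c) * (q^(w*s) * ∏ i ∈ range w, (q^w - q^i))) *
        (q^(w*s) * ∏ i ∈ range s, (q^(N-w) - q^i)) := mul_le_mul_of_nonneg_right hmain hBnn
    _ = 4 * q^(k*c) * ((q^(w*s) * ∏ i ∈ range s, (q^(N-w) - q^i)) *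
        (q^(w*s) * ∏ i ∈ range w, (q^w - q^i))) := by ring




section Shape
variable {K : Type} [Field K] [Fintype K]



lemma shape_count (Q : Type) [AddCommGroup Q] [Module K Q] [Fintype Q] [FiniteDimensional K Q]
    (W : Submodule K Q) (w s : ℕ) (hw : finrank K W = w) (hws : w + s ≤ finrank K Q) :
    ∃ Λ : Finset (Fin (s + w) → Q),
      (∀ v ∈ Λ, LinearIndependent K v ∧ W ≤ Submodule.span K (Set.range v)) ∧
      (Λ.card : ℕ) =
        ((∏ i ∈ range s, (Fintype.card K^(finrank K Q - w) - Fintype.card K^i)) *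
          Fintype.card K^(w*s)) *
        ((∏ i ∈ range w, (Fintype.card K^w - Fintype.card K^i)) * Fintype.card K^(w*s)) := by
  classical
  set q := Fintype.card K with hqdef
  let Qw := Q ⧸ W
  let π : Q →ₗ[K] Qw := W.mkQ
  have hπs : Function.Surjective π := Submodule.mkQ_surjective W
  let σ : Qw → Q := Function.surjInv hπs
  have hσ : ∀ z : Qw, π (σ z) = z := Function.surjInv_eq hπs
  -- domain
  let Γ := ({y : Fin s → Qw // LinearIndependent K y} ×
    (Fin s → W)) × ({b : Fin w → W // LinearIndependent K b} × (Fin w → Fin s → K))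
  -- components of the map
  let xf : Γ → Fin s → Q := fun γ i => σ (γ.1.1.1 i) + (γ.1.2 i : Q)
  let ef : Γ → Fin w → Q := fun γ j => (γ.2.1.1 j : Q) + ∑ i, γ.2.2 j i • xf γ i
  let Ψ : Γ → (Fin (s + w) → Q) := fun γ => Fin.append (xf γ) (ef γ)
  have hπx : ∀ γ : Γ, ∀ i, π (xf γ i) = γ.1.1.1 i := by
    intro γ i
    simp only [xf, map_add, hσ]
    have h0 : π (γ.1.2 i : Q) = 0 := by
      rw [show π = W.mkQ from rfl, Submodule.mkQ_apply, Submodule.Quotient.mk_eq_zero]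
      exact SetLike.coe_mem _
    rw [h0, add_zero]
  have hxind : ∀ γ : Γ, LinearIndependent K (xf γ) := by
    intro γ
    apply LinearIndependent.of_comp π
    have : ⇑π ∘ xf γ = γ.1.1.1 := funext fun i => hπx γ i
    rw [this]
    exact γ.1.1.2
  -- span of x-block meets W trivially
  have hdisj : ∀ γ : Γ, Submodule.span K (Set.range (xf γ)) ⊓ W = ⊥ := by
    intro γ
    rw [eq_bot_iff]
    rintro z ⟨hz1, hz2⟩
    obtain ⟨a, ha⟩ := (Submodule.mem_span_range_iff_exists_fun K).mp hz1
    have hπz : π z = 0 := by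
      rw [show π = W.mkQ from rfl, Submodule.mkQ_apply, Submodule.Quotient.mk_eq_zero]
      exact hz2
    have h0 : ∑ i, a i • γ.1.1.1 i = 0 := by
      rw [← hπz, ← ha]
      rw [map_sum]
      congr 1
      funext i
      rw [map_smul, hπx]
    have ha0 : ∀ i, a i = 0 := Fintype.linearIndependent_iff.mp γ.1.1.2 a h0
    have : z = 0 := by
      rw [← ha]
      simp [ha0]
    simp [this]
  have hbspan : ∀ γ : Γ, Submodule.span K (Set.range (fun j => (γ.2.1.1 j : Q))) = W := by
    intro γ
    have h1 : (fun j => (γ.2.1.1 j : Q)) = (W.subtype : W →ₗ[K] Q) ∘ γ.2.1.1 := rfl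
    rw [h1, Set.range_comp, ← Submodule.map_span]
    have h2 : Submodule.span K (Set.range γ.2.1.1) = (⊤ : Submodule K W) := by
      apply Submodule.eq_top_of_finrank_eq
      rw [finrank_span_eq_card γ.2.1.2, Fintype.card_fin, hw]
    rw [h2]
    exact Submodule.map_subtype_top W
  -- span of the full tuple
  have hspan : ∀ γ : Γ, Submodule.span K (Set.range (Ψ γ)) =
      Submodule.span K (Set.range (xf γ)) ⊔ W := by
    intro γ
    have hrange : Set.range (Ψ γ) = Set.range (xf γ) ∪ Set.range (ef γ) := by
      apply Set.eq_of_subset_of_subset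
      · rw [Set.range_subset_iff]
        intro i
        induction i using Fin.addCases with
        | left i =>
            rw [show Ψ γ (Fin.castAdd w i) = xf γ i from Fin.append_left _ _ i]
            exact Or.inl ⟨i, rfl⟩
        | right j =>
            rw [show Ψ γ (Fin.natAdd s j) = ef γ j from Fin.append_right _ _ j]
            exact Or.inr ⟨j, rfl⟩
      · apply Set.union_subset
        · rintro _ ⟨i, rfl⟩
          exact ⟨Fin.castAdd w i, Fin.append_left _ _ i⟩
        · rintro _ ⟨j, rfl⟩
          exact ⟨Fin.natAdd s j, Fin.append_right _ _ j⟩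
    rw [hrange, Submodule.span_union]
    apply le_antisymm
    · apply sup_le le_sup_left
      rw [Submodule.span_le]
      rintro _ ⟨j, rfl⟩
      have h1 : (γ.2.1.1 j : Q) ∈ (Submodule.span K (Set.range (xf γ)) ⊔ W : Submodule K Q) :=
        Submodule.mem_sup_right (SetLike.coe_mem _)
      have h2 : ∑ i, γ.2.2 j i • xf γ i ∈
          (Submodule.span K (Set.range (xf γ)) ⊔ W : Submodule K Q) := by
        apply Submodule.mem_sup_left
        apply Submodule.sum_mem
        intro i _
        exact Submodule.smul_mem _ _ (Submodule.subset_span ⟨i, rfl⟩)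
      exact Submodule.add_mem _ h1 h2
    · apply sup_le le_sup_left
      conv_lhs => rw [← hbspan γ]
      rw [Submodule.span_le]
      rintro _ ⟨j, rfl⟩
      show (γ.2.1.1 j : Q) ∈ _
      have h1 : (γ.2.1.1 j : Q) = ef γ j - ∑ i, γ.2.2 j i • xf γ i := by
        simp [ef]
      rw [h1]
      apply Submodule.sub_mem
      · exact Submodule.mem_sup_right (Submodule.subset_span ⟨j, rfl⟩)
      · apply Submodule.mem_sup_left
        apply Submodule.sum_mem
        intro i _
        exact Submodule.smul_mem _ _ (Submodule.subset_span ⟨i, rfl⟩)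
  have hfrspan : ∀ γ : Γ, finrank K (Submodule.span K (Set.range (Ψ γ))) = s + w := by
    intro γ
    rw [hspan γ]
    have h1 := Submodule.finrank_sup_add_finrank_inf_eq
      (Submodule.span K (Set.range (xf γ))) W
    rw [hdisj γ] at h1
    have h2 : finrank K (Submodule.span K (Set.range (xf γ))) = s := by
      rw [finrank_span_eq_card (hxind γ), Fintype.card_fin]
    rw [h2, hw] at h1
    have h3 : finrank K (⊥ : Submodule K Q) = 0 := finrank_bot K Q
    omega
  have hind : ∀ γ : Γ, LinearIndependent K (Ψ γ) := by
    intro γ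
    rw [linearIndependent_iff_card_eq_finrank_span]
    rw [Fintype.card_fin]
    unfold Set.finrank
    rw [hfrspan γ]
  have hWle : ∀ γ : Γ, W ≤ Submodule.span K (Set.range (Ψ γ)) := by
    intro γ
    rw [hspan γ]
    exact le_sup_right
  -- injectivity
  have hinj : Function.Injective Ψ := by
    intro γ γ' hΨ
    have hx : xf γ = xf γ' := by
      funext i
      have := congrFun hΨ (Fin.castAdd w i)
      simpa [Ψ, Fin.append_left] using this
    have he : ef γ = ef γ' := by
      funext j
      have := congrFun hΨ (Fin.natAdd s j)
      simpa [Ψ, Fin.append_right] using this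
    have hy : γ.1.1 = γ'.1.1 := by
      apply Subtype.ext
      funext i
      rw [← hπx γ i, ← hπx γ' i, hx]
    have hu : γ.1.2 = γ'.1.2 := by
      funext i
      apply Subtype.ext
      have h1 : (γ.1.2 i : Q) = xf γ i - σ (γ.1.1.1 i) := by simp [xf]
      have h2 : (γ'.1.2 i : Q) = xf γ' i - σ (γ'.1.1.1 i) := by simp [xf]
      rw [h1, h2, hx]
      have : γ.1.1.1 = γ'.1.1.1 := congrArg Subtype.val hy
      rw [this]
    -- second components
    have hb : ∀ j, (γ.2.1.1 j : Q) - (γ'.2.1.1 j : Q) =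
        ∑ i, (γ'.2.2 j i - γ.2.2 j i) • xf γ i := by
      intro j
      have := congrFun he j
      simp only [ef] at this
      rw [hx] at this ⊢
      have hsum : ∀ (f g : Fin s → K), (∑ i, (f i - g i) • xf γ' i) =
          (∑ i, f i • xf γ' i) - (∑ i, g i • xf γ' i) := by
        intro f g
        rw [← Finset.sum_sub_distrib]
        congr 1
        funext i
        rw [sub_smul]
      rw [hsum, sub_eq_sub_iff_add_eq_add, this]
      abel
    have hbz : ∀ j, (γ.2.1.1 j : Q) = (γ'.2.1.1 j : Q) ∧
        ∀ i, γ'.2.2 j i - γ.2.2 j i = 0 := by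
      intro j
      have hmem1 : (γ.2.1.1 j : Q) - (γ'.2.1.1 j : Q) ∈ W :=
        Submodule.sub_mem _ (SetLike.coe_mem _) (SetLike.coe_mem _)
      have hmem2 : (γ.2.1.1 j : Q) - (γ'.2.1.1 j : Q) ∈
          Submodule.span K (Set.range (xf γ)) := by
        rw [hb j]
        apply Submodule.sum_mem
        intro i _
        exact Submodule.smul_mem _ _ (Submodule.subset_span ⟨i, rfl⟩)
      have h0 : (γ.2.1.1 j : Q) - (γ'.2.1.1 j : Q) = 0 := by
        have := hdisj γ
        have hm : (γ.2.1.1 j : Q) - (γ'.2.1.1 j : Q) ∈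
            (Submodule.span K (Set.range (xf γ)) ⊓ W : Submodule K Q) := ⟨hmem2, hmem1⟩
        rw [this] at hm
        simpa using hm
      constructor
      · have := sub_eq_zero.mp h0
        exact this
      · have h1 : ∑ i, (γ'.2.2 j i - γ.2.2 j i) • xf γ i = 0 := by
          rw [← hb j, h0]
        exact Fintype.linearIndependent_iff.mp (hxind γ) _ h1
    have hbeq : γ.2.1 = γ'.2.1 := by
      apply Subtype.ext
      funext j
      apply Subtype.ext
      exact (hbz j).1
    have hζ : γ.2.2 = γ'.2.2 := by
      funext j i
      have := (hbz j).2 i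
      have h2 := sub_eq_zero.mp this
      exact h2.symm
    obtain ⟨⟨y1, u1⟩, ⟨b1, z1⟩⟩ := γ
    obtain ⟨⟨y1', u1'⟩, ⟨b1', z1'⟩⟩ := γ'
    simp only at hy hu hbeq hζ
    rw [Prod.mk.injEq, Prod.mk.injEq, Prod.mk.injEq]
    exact ⟨⟨hy, hu⟩, hbeq, hζ⟩
  -- conclude
  refine ⟨Finset.image Ψ Finset.univ, ?_, ?_⟩
  · intro v hv
    rw [Finset.mem_image] at hv
    obtain ⟨γ, _, rfl⟩ := hv
    exact ⟨hind γ, hWle γ⟩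
  · rw [Finset.card_image_of_injective _ hinj, Finset.card_univ]
    have hcardQw : Fintype.card Qw = q^(finrank K Q - w) := by
      have h1 : Fintype.card Qw = q ^ finrank K Qw := card_eq_pow_finrank
      have h2 : finrank K Qw + finrank K W = finrank K Q :=
        Submodule.finrank_quotient_add_finrank W
      rw [h1]
      congr 1
      omega
    have hcardW : Fintype.card W = q^w := by
      rw [card_eq_pow_finrank (K := K) (V := W), hw]
    have c1 : Fintype.card {y : Fin s → Qw // LinearIndependent K y} =
        ∏ i ∈ range s, (q^(finrank K Q - w) - q^i) := by
      rw [card_li Qw s, hcardQw]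
    have c2 : Fintype.card (Fin s → W) = q^(w*s) := by
      rw [Fintype.card_fun, hcardW, Fintype.card_fin, ← pow_mul]
    have c3 : Fintype.card {b : Fin w → W // LinearIndependent K b} =
        ∏ i ∈ range w, (q^w - q^i) := by
      rw [card_li (↥W) w, hcardW]
    have c4 : Fintype.card (Fin w → Fin s → K) = q^(w*s) := by
      rw [Fintype.card_fun, Fintype.card_fun, Fintype.card_fin, Fintype.card_fin,
        ← hqdef, ← pow_mul, Nat.mul_comm s w]
    rw [Fintype.card_prod, Fintype.card_prod, Fintype.card_prod, c1, c2, c3, c4]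
end Shape





lemma msum_le_msum {β : Type} (s : Multiset β) (f g : β → ℝ) (h : ∀ a ∈ s, f a ≤ g a) :
    (s.map f).sum ≤ (s.map g).sum := by
  induction s using Multiset.induction_on with
  | empty => simp
  | cons a s ih =>
      simp only [Multiset.map_cons, Multiset.sum_cons]
      exact add_le_add (h a (Multiset.mem_cons_self a s))
        (ih fun b hb => h b (Multiset.mem_cons_of_mem hb))

lemma msum_exchange {β γ : Type} (s : Multiset β) (F : Finset γ) (g : β → γ → ℕ) :
    (s.map (fun b => ∑ v ∈ F, g b v)).sum = ∑ v ∈ F, (s.map (fun b => g b v)).sum := by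
  induction s using Multiset.induction_on with
  | empty => simp
  | cons a s ih =>
      simp only [Multiset.map_cons, Multiset.sum_cons, ih, ← Finset.sum_add_distrib]

lemma msum_indicator {β : Type} (s : Multiset β) (p : β → Prop) :
    (s.map (fun b => if p b then 1 else 0)).sum = Multiset.card (s.filter p) := by
  induction s using Multiset.induction_on with
  | empty => simp
  | cons a s ih =>
      simp only [Multiset.map_cons, Multiset.sum_cons, Multiset.filter_cons]
      by_cases h : p a <;> simp [h, ih] <;> omega

lemma ball_count {K : Type} [Field K] [Fintype K]
    (Q : Type) [AddCommGroup Q] [Module K Q] [Fintype Q] [FiniteDimensional K Q]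
    (k m θ : ℕ) (hk : 1 ≤ k) (h2k : 2*k ≤ m + 1) (hmN : m ≤ finrank K Q)
    (S : Multiset (Submodule K Q)) (hd : ∀ W ∈ S, finrank K W ≤ k)
    (hY : ∀ Y : Submodule K Q, finrank K Y ≤ m →
       Multiset.card (S.filter (fun W => W ≤ Y)) ≤ θ) :
    (Multiset.card S : ℝ) ≤
      4 * (θ : ℝ) * (Fintype.card K : ℝ)^(k*(finrank K Q - m)) := by
  classical
  set q := Fintype.card K with hqdef
  set N := finrank K Q with hNdef
  set c := N - m with hcdef
  have hq2 : 2 ≤ q := Fintype.one_lt_card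
  have hq2R : (2:ℝ) ≤ (q:ℝ) := by exact_mod_cast hq2
  have hq1R : (1:ℝ) ≤ (q:ℝ) := by linarith
  have hkm : k ≤ m := by omega
  -- the ambient finset of independent tuples
  let Λ' : Finset (Fin m → Q) := univ.filter (fun v => LinearIndependent K v)
  have hA : (Λ'.card : ℕ) = ∏ i ∈ range m, (q^N - q^i) := by
    have h2 : (Λ'.card : ℕ) = Fintype.card {v : Fin m → Q // LinearIndependent K v} := by
      rw [← Fintype.card_coe Λ']
      apply Fintype.card_congr
      apply Equiv.subtypeEquivRight
      intro v
      simp [Λ']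
    rw [h2, card_li (K := K) Q m,
      show Fintype.card Q = q^N from card_eq_pow_finrank]
  have hANat : ∀ i, i < m → q^i < q^N := by
    intro i hi
    exact Nat.pow_lt_pow_right hq2 (by omega)
  have hAR : ((Λ'.card : ℕ) : ℝ) = ∏ i ∈ range m, ((q:ℝ)^N - (q:ℝ)^i) := by
    rw [hA, Nat.cast_prod]
    apply Finset.prod_congr rfl
    intro i hi
    simp only [mem_range] at hi
    rw [Nat.cast_sub (le_of_lt (hANat i hi))]
    push_cast
    ring
  have hApos : (0:ℝ) < (Λ'.card : ℝ) := by
    rw [hAR]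
    apply Finset.prod_pos
    intro i hi
    simp only [mem_range] at hi
    have := hANat i hi
    have h2 : ((q:ℝ)^i) < ((q:ℝ)^N) := by exact_mod_cast this
    linarith
  -- per-codeword lower bound on incidences
  have key : ∀ W ∈ S, (Λ'.card : ℝ) ≤ 4*(q:ℝ)^(k*c) *
      ((Λ'.filter (fun v => W ≤ Submodule.span K (Set.range v))).card : ℝ) := by
    intro W hW
    set w := finrank K W with hwdef
    have hwk : w ≤ k := hd W hW
    set s' := m - w with hs'def
    have hsw : w + s' = m := by omega
    obtain ⟨Λw, hprop, hcard⟩ := shape_count Q W w s' rfl (by omega)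
    -- transport to Fin m
    have heq : s' + w = m := by omega
    let F : (Fin (s'+w) → Q) → (Fin m → Q) := fun v => v ∘ (Fin.cast heq.symm)
    have hFinj : Function.Injective F := by
      intro v v' hvv
      funext j
      have h1 : j = Fin.cast heq.symm (Fin.cast heq j) := by
        apply Fin.ext; simp
      rw [h1]
      exact congrFun hvv (Fin.cast heq j)
    have hsub : Λw.image F ⊆ Λ'.filter (fun v => W ≤ Submodule.span K (Set.range v)) := by
      intro v hv
      rw [Finset.mem_image] at hv
      obtain ⟨v0, hv0, rfl⟩ := hv
      obtain ⟨hli, hWle⟩ := hprop v0 hv0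
      rw [Finset.mem_filter]
      have hrange : Set.range (F v0) = Set.range v0 := by
        apply Function.Surjective.range_comp
        intro j
        exact ⟨Fin.cast heq j, by apply Fin.ext; simp⟩
      have hcastinj : Function.Injective (Fin.cast heq.symm : Fin m → Fin (s'+w)) := by
        intro a b hab
        apply Fin.ext
        simpa [Fin.ext_iff] using hab
      refine ⟨?_, by rw [hrange]; exact hWle⟩
      rw [Finset.mem_filter]
      exact ⟨Finset.mem_univ _, hli.comp _ hcastinj⟩
    have hcard2 : (Λw.card : ℕ) ≤
        (Λ'.filter (fun v => W ≤ Submodule.span K (Set.range v))).card := by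
      rw [← Finset.card_image_of_injective Λw hFinj]
      exact Finset.card_le_card hsub
    -- independence of F v0 needed for filter membership?  (filter only uses the ≤ and univ)
    -- now the numeric bound
    have hNw : ∀ i, i < s' → q^i ≤ q^(N-w) := by
      intro i hi
      exact Nat.pow_le_pow_right (by omega) (by omega)
    have hww : ∀ i, i < w → q^i ≤ q^w := by
      intro i hi
      exact Nat.pow_le_pow_right (by omega) (by omega)
    have hcardR : ((Λw.card : ℕ) : ℝ) =
        ((q:ℝ)^(w*s') * ∏ i ∈ range s', ((q:ℝ)^(N-w) - (q:ℝ)^i)) *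
        ((q:ℝ)^(w*s') * ∏ i ∈ range w, ((q:ℝ)^w - (q:ℝ)^i)) := by
      have e1 : ∀ i ∈ range s', ((q^(N-w) - q^i : ℕ) : ℝ) = (q:ℝ)^(N-w) - (q:ℝ)^i := by
        intro i hi
        simp only [mem_range] at hi
        rw [Nat.cast_sub (hNw i hi)]
        push_cast; ring
      have e2 : ∀ i ∈ range w, ((q^w - q^i : ℕ) : ℝ) = (q:ℝ)^w - (q:ℝ)^i := by
        intro i hi
        simp only [mem_range] at hi
        rw [Nat.cast_sub (hww i hi)]
        push_cast; ring
      rw [hcard]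
      push_cast
      rw [Finset.prod_congr rfl e1, Finset.prod_congr rfl e2]
      ring
    have hki := key_ineq (q:ℝ) hq2R N k c w s' hwk (by omega)
      (by
        have h1 : w * N = w*m + w*c := by
          have h0 : m + c = N := by omega
          calc w * N = w * (m + c) := by rw [h0]
            _ = w*m + w*c := by ring
        have h2 : w*c ≤ k*c := Nat.mul_le_mul_right _ hwk
        have h3 : w*(w+s') = w*m := by rw [hsw]
        omega)
    rw [hAR]
    calc ∏ i ∈ range m, ((q:ℝ)^N - (q:ℝ)^i) = ∏ i ∈ range (w+s'), ((q:ℝ)^N - (q:ℝ)^i) := by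
          rw [hsw]
      _ ≤ 4 * (q:ℝ)^(k*c) * (((q:ℝ)^(w*s') * ∏ i ∈ range s', ((q:ℝ)^(N-w) - (q:ℝ)^i)) *
            ((q:ℝ)^(w*s') * ∏ i ∈ range w, ((q:ℝ)^w - (q:ℝ)^i))) := hki
      _ = 4 * (q:ℝ)^(k*c) * ((Λw.card : ℕ) : ℝ) := by rw [hcardR]
      _ ≤ 4 * (q:ℝ)^(k*c) *
            ((Λ'.filter (fun v => W ≤ Submodule.span K (Set.range v))).card : ℝ) := by
          apply mul_le_mul_of_nonneg_left _ (by positivity)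
          exact_mod_cast hcard2
  -- exchange sums
  have hEx : (S.map (fun W =>
      ((Λ'.filter (fun v => W ≤ Submodule.span K (Set.range v))).card : ℕ))).sum ≤
      θ * Λ'.card := by
    have e1 : ∀ W : Submodule K Q,
        (Λ'.filter (fun v => W ≤ Submodule.span K (Set.range v))).card =
        ∑ v ∈ Λ', (if W ≤ Submodule.span K (Set.range v) then 1 else 0) := by
      intro W
      rw [Finset.card_filter]
    calc (S.map (fun W =>
        ((Λ'.filter (fun v => W ≤ Submodule.span K (Set.range v))).card : ℕ))).sum
        = (S.map (fun W => ∑ v ∈ Λ',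
            (if W ≤ Submodule.span K (Set.range v) then 1 else 0))).sum := by
          congr 1
          apply Multiset.map_congr rfl
          intro W _
          exact e1 W
      _ = ∑ v ∈ Λ', (S.map (fun W =>
            (if W ≤ Submodule.span K (Set.range v) then 1 else 0))).sum :=
          msum_exchange S Λ' _
      _ = ∑ v ∈ Λ', Multiset.card (S.filter
            (fun W => W ≤ Submodule.span K (Set.range v))) := by
          apply Finset.sum_congr rfl
          intro v _
          exact msum_indicator S _
      _ ≤ ∑ _v ∈ Λ', θ := by
          apply Finset.sum_le_sum
          intro v hv
          apply hY
          have h1 : finrank K (Submodule.span K (Set.range v)) ≤ m := by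
            have h2 := finrank_span_le_card (R := K) (Set.range v)
            have h3 : (Set.range v).toFinset.card ≤ m := by
              rw [Set.toFinset_range]
              calc (Finset.image v univ).card ≤ (univ : Finset (Fin m)).card :=
                    Finset.card_image_le
                _ = m := by simp
            omega
          exact h1
      _ = θ * Λ'.card := by
          rw [Finset.sum_const, smul_eq_mul, mul_comm]
  -- combine
  have hcomb : (Multiset.card S : ℝ) * (Λ'.card : ℝ) ≤
      4 * (q:ℝ)^(k*c) * ((θ : ℝ) * (Λ'.card : ℝ)) := by
    calc (Multiset.card S : ℝ) * (Λ'.card : ℝ)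
        = (S.map (fun _ => (Λ'.card : ℝ))).sum := by
          rw [Multiset.map_const', Multiset.sum_replicate, nsmul_eq_mul]
      _ ≤ (S.map (fun W => 4*(q:ℝ)^(k*c) *
            ((Λ'.filter (fun v => W ≤ Submodule.span K (Set.range v))).card : ℝ))).sum :=
          msum_le_msum _ _ _ key
      _ = 4*(q:ℝ)^(k*c) * (S.map (fun W =>
            ((Λ'.filter (fun v => W ≤ Submodule.span K (Set.range v))).card : ℝ))).sum := by
          rw [← Multiset.sum_map_mul_left]
      _ ≤ 4 * (q:ℝ)^(k*c) * ((θ : ℝ) * (Λ'.card : ℝ)) := by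
          apply mul_le_mul_of_nonneg_left _ (by positivity)
          have h1 : (S.map (fun W =>
              ((Λ'.filter (fun v => W ≤ Submodule.span K (Set.range v))).card : ℝ))).sum =
              (((S.map (fun W =>
                ((Λ'.filter (fun v => W ≤ Submodule.span K (Set.range v))).card : ℕ))).sum : ℕ) : ℝ) := by
            rw [Nat.cast_multiset_sum, Multiset.map_map]
            rfl
          rw [h1]
          have h2 : ((θ * Λ'.card : ℕ) : ℝ) = (θ:ℝ) * (Λ'.card:ℝ) := by push_cast; ring
          rw [← h2]
          exact_mod_cast hEx
  have := le_of_mul_le_mul_right (by linarith [hcomb] : (Multiset.card S : ℝ) * (Λ'.card : ℝ) ≤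
      (4 * (θ:ℝ) * (q:ℝ)^(k*c)) * (Λ'.card : ℝ)) hApos
  exact this





lemma finrank_comap_mkQ_le {K V : Type} [Field K] [AddCommGroup V] [Module K V]
    [FiniteDimensional K V] (A : Submodule K V) (Z : Submodule K (V ⧸ A)) :
    finrank K (Z.comap A.mkQ) ≤ finrank K A + finrank K Z := by
  set P := Z.comap A.mkQ with hP
  let f : P →ₗ[K] V ⧸ A := A.mkQ.domRestrict P
  have h1 : finrank K (LinearMap.range f) + finrank K (LinearMap.ker f) = finrank K P :=
    LinearMap.finrank_range_add_finrank_ker f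
  have h2 : LinearMap.range f ≤ Z := by
    rintro z hz
    rw [LinearMap.mem_range] at hz
    obtain ⟨x, rfl⟩ := hz
    exact Submodule.mem_comap.mp x.2
  have h3 : finrank K (LinearMap.range f) ≤ finrank K Z := Submodule.finrank_mono h2
  have h4 : finrank K (LinearMap.ker f) ≤ finrank K A := by
    have e := Submodule.equivMapOfInjective P.subtype (Submodule.injective_subtype P)
      (LinearMap.ker f)
    rw [e.finrank_eq]
    apply Submodule.finrank_mono
    rintro x hx
    rw [Submodule.mem_map] at hx
    obtain ⟨y, hy, rfl⟩ := hx
    have h5 : A.mkQ (y : V) = 0 := hy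
    rwa [Submodule.mkQ_apply, Submodule.Quotient.mk_eq_zero] at h5
  omega

theorem covering_code_size_upper_bound (q α h ℓ t ε r : ℕ)
    (K : Type) [Field K] [Fintype K] (hq : Fintype.card K = q)
    (hα : 2 ≤ α) (hh : 1 ≤ h) (hℓ : 1 ≤ ℓ) (ht : 1 ≤ t) (hhe : 2 * ℓ ≤ h - ε)
    (C : Multiset (Submodule K (Fin (h * t) → K)))
    (hdim : ∀ W ∈ C, Module.finrank K W = ℓ * t)
    (hcov : ∀ M : Multiset (Submodule K (Fin (h * t) → K)), M ≤ C →
      Multiset.card M = α → (h - ε) * t ≤ Module.finrank K M.sum)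
    (hr : Multiset.card C = r) :
    (r : ℝ) < 4 * ((α - (h - ε) / ℓ + 1 : ℕ) : ℝ) * (q : ℝ) ^ (ℓ * t * (ε * t + 1)) +
      (α : ℝ) - ((α - (h - ε) / ℓ + 1 : ℕ) : ℝ) := by
  classical
  set k := ℓ * t with hkdef
  set T := (h - ε) * t with hT
  set f := (h - ε) / ℓ with hf
  set θ := α - f + 1 with hθ
  have hq2 : 2 ≤ q := hq ▸ Fintype.one_lt_card
  have hq2R : (2:ℝ) ≤ (q:ℝ) := by exact_mod_cast hq2
  have hpow1 : (1:ℝ) ≤ (q:ℝ) ^ (k * (ε * t + 1)) :=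
    one_le_pow₀ (by linarith)
  have hθ1 : 1 ≤ θ := by omega
  have hθ1R : (1:ℝ) ≤ (θ:ℝ) := by exact_mod_cast hθ1
  have hk1 : 1 ≤ k := Nat.one_le_iff_ne_zero.mpr (by positivity)
  have hεh : ε ≤ h := by omega
  have hf2 : 2 ≤ f := (Nat.le_div_iff_mul_le (by omega)).mpr hhe
  have hfk : f * ℓ ≤ h - ε := Nat.div_mul_le_self (h - ε) ℓ
  have hfkT : f * k ≤ T := by
    calc f * k = (f * ℓ) * t := by rw [hkdef]; ring
      _ ≤ (h - ε) * t := Nat.mul_le_mul_right t hfk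
  have hTn : T ≤ h * t := Nat.mul_le_mul_right t (by omega)
  have hTεn : T + ε * t = h * t := by
    rw [hT, ← Nat.add_mul]
    congr 1
    omega
  clear_value k T f θ
  rcases lt_or_ge r α with hrα | hαr
  · -- trivial case r < α
    have hrR : (r:ℝ) ≤ (α:ℝ) - 1 := by
      have : r + 1 ≤ α := hrα
      have := (Nat.cast_le (α := ℝ)).mpr this
      push_cast at this
      linarith
    have hθα : θ ≤ α - 1 := by omega
    have hθαR : (θ:ℝ) ≤ (α:ℝ) - 1 := by
      have h1 := (Nat.cast_le (α := ℝ)).mpr hθα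
      rwa [Nat.cast_sub (by omega : 1 ≤ α), Nat.cast_one] at h1
    have h2 : 4*(θ:ℝ)*1 ≤ 4*(θ:ℝ)*(q:ℝ)^(k * (ε * t + 1)) :=
      mul_le_mul_of_nonneg_left hpow1 (by positivity)
    linarith
  · -- main case
    rcases lt_or_ge α f with h2a | hfα
    · -- impossible: f > α
      exfalso
      obtain ⟨M, hMle, hMcard⟩ := mexists_le_card C α (by omega)
      have h1 := hcov M hMle hMcard
      have h2 : finrank K M.sum ≤ α * k := by
        have h3 := finrank_msum_le M (fun p hp => (hdim p (Multiset.mem_of_le hMle hp)).le)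
        rwa [hMcard] at h3
      have h4 : (α+1) * k ≤ f * k := Nat.mul_le_mul_right k (by omega)
      have h5 : α * k + k = (α+1)*k := by ring
      omega
    · -- f ≤ α
      obtain ⟨M1, hM1le, hM1card⟩ := mexists_le_card C (f-2) (by omega)
      set C' := C - M1 with hC'
      have hC'card : Multiset.card C' = r - (f-2) := by
        rw [hC', Multiset.card_sub hM1le, hM1card, hr]
      set V1 := M1.sum with hV1
      set v := finrank K V1 with hv
      have hvle : v ≤ (f-2)*k := by
        have h3 := finrank_msum_le M1 (fun p hp => (hdim p (Multiset.mem_of_le hM1le hp)).le)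
        rwa [hM1card] at h3
      have hvT : v + 2*k ≤ T := by
        have h5 : (f-2)*k + 2*k = f*k := by rw [← Nat.add_mul]; congr 1; omega
        omega
      set D := T - v with hD
      set m := D - 1 with hm
      clear_value v D m
      set Q := (Fin (h*t) → K) ⧸ V1 with hQ
      haveI : Fintype Q := Fintype.ofFinite Q
      have hNn : finrank K (Fin (h*t) → K) = h * t := by
        rw [finrank_pi]
        simp
      have hNQ : finrank K Q = h * t - v := by
        have h6 := Submodule.finrank_quotient_add_finrank V1
        rw [hNn] at h6
        have h7 : finrank K Q = finrank K ((Fin (h*t) → K) ⧸ V1) := rfl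
        rw [h7]
        omega
      have hc : finrank K Q - m = ε * t + 1 := by omega
      have hvm : v + m + 1 = T := by omega
      set S := C'.map (Submodule.map V1.mkQ) with hS
      have hd2 : ∀ Wq ∈ S, finrank K Wq ≤ k := by
        intro Wq hWq
        rw [hS, Multiset.mem_map] at hWq
        obtain ⟨W, hW, rfl⟩ := hWq
        have hWC : W ∈ C := Multiset.mem_of_le (tsub_le_self) hW
        calc finrank K (W.map V1.mkQ) ≤ finrank K W := Submodule.finrank_map_le _ _
          _ = k := hdim W hWC
      have hYclaim : ∀ Y : Submodule K Q, finrank K Y ≤ m →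
          Multiset.card (S.filter (fun Wq => Wq ≤ Y)) ≤ θ := by
        intro Y hY
        rw [hS, Multiset.filter_map, Multiset.card_map]
        by_contra hgt
        push_neg at hgt
        obtain ⟨B, hBle, hBcard⟩ := mexists_le_card _ (θ+1) hgt
        have hBC' : B ≤ C' := le_trans hBle (Multiset.filter_le _ _)
        have hMsle : M1 + B ≤ C := by
          have h7 : B + M1 ≤ C := (le_tsub_iff_right hM1le).mp hBC'
          rwa [add_comm] at h7
        have hMscard : Multiset.card (M1 + B) = α := by
          rw [Multiset.card_add, hM1card, hBcard]
          omega
        have h8 := hcov (M1 + B) hMsle hMscard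
        set P := Y.comap V1.mkQ with hPdef
        have hV1P : V1 ≤ P := by
          intro x hx
          rw [hPdef, Submodule.mem_comap, Submodule.mkQ_apply]
          rw [show (Submodule.Quotient.mk x : Q) = 0 from
            (Submodule.Quotient.mk_eq_zero V1).mpr hx]
          exact Y.zero_mem
        have hBP : B.sum ≤ P := by
          apply msum_le
          intro W hW
          have hWf : W ∈ Multiset.filter ((fun Wq => Wq ≤ Y) ∘ Submodule.map V1.mkQ) C' :=
            Multiset.mem_of_le hBle hW
          rw [Multiset.mem_filter] at hWf
          exact Submodule.map_le_iff_le_comap.mp hWf.2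
        have hMP : (M1 + B).sum ≤ P := by
          rw [Multiset.sum_add, Submodule.add_eq_sup]
          exact sup_le hV1P hBP
        have h9 : finrank K (M1 + B).sum ≤ finrank K P := Submodule.finrank_mono hMP
        have h10 := finrank_comap_mkQ_le V1 Y
        rw [← hPdef, ← hv] at h10
        have h12 := le_trans h9 h10
        have h13 : T ≤ v + finrank K Y := le_trans h8 h12
        have h14 : T ≤ v + m := le_trans h13 (Nat.add_le_add_left hY v)
        omega
      have hbc := ball_count Q k m θ hk1 (by omega) (by omega) S hd2 hYclaim
      rw [Multiset.card_map, hC'card, hq, hc] at hbc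
      -- now final arithmetic
      have hrge : f - 2 ≤ r := by omega
      have hcast : ((r - (f-2) : ℕ) : ℝ) = (r:ℝ) - ((f:ℝ) - 2) := by
        rw [Nat.cast_sub hrge, Nat.cast_sub hf2]
        push_cast
        ring
      rw [hcast] at hbc
      have hθR : (θ:ℝ) = (α:ℝ) - (f:ℝ) + 1 := by
        rw [hθ, Nat.cast_add, Nat.cast_sub hfα]
        push_cast
        ring
      rw [hθR]
      rw [hθR] at hbc
      linarith
end

section
/- Let α ≥ 2, r ≥ 1, h, ℓ, t ≥ 1, ε ≥ 0, h - ε ≥ 2ℓ. If there exists a collection of r subspaces of F_q^{ht}, each of dimension at most ℓt, such that every α of them span a subspace of dimension at least (h-ε)t, then q^t ≥ ((r + θ - α)/(γθ))^{1/(ℓ(εt+1))}, where θ = α - ⌊(h-ε)/ℓ⌋ + 1 and γ = 4 (assuming r + θ - α > 0). -/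
open Finset in
lemma aux_prod_one_sub (x : ℝ) (hx0 : 0 ≤ x) (hx : x ≤ 1/2) (N : ℕ) :
    1/4 + x^N/4 ≤ ∏ j ∈ Finset.range (N+1), (1 - x^(j+1)) := by
  induction N with
  | zero => simp; nlinarith
  | succ N ih =>
    rw [Finset.prod_range_succ]
    have h1 : (0:ℝ) ≤ x^N := pow_nonneg hx0 N
    have h2 : x^(N+1) ≤ x^N / 2 := by
      rw [pow_succ]; nlinarith
    have hx2 : x^2 ≤ 1/4 := by nlinarith
    have h3 : x^(N+2) ≤ x^N / 4 := by
      have e : x^(N+2) = x^N * x^2 := by ring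
      rw [e]
      calc x^N * x^2 ≤ x^N * (1/4) := mul_le_mul_of_nonneg_left hx2 h1
      _ = x^N/4 := by ring
    have h4 : x^(N+1+1) ≤ 1 := by
      calc x^(N+2) ≤ x^N/4 := h3
      _ ≤ (1:ℝ) := by
        have : x^N ≤ 1 := pow_le_one₀ hx0 (by linarith)
        linarith
    have h5 : 0 ≤ 1 - x^(N+1+1) := by linarith
    calc 1/4 + x^(N+1)/4 ≤ (1/4 + x^N/4) * (1 - x^(N+2)) := by
          have hxN2 : 0 ≤ x^(N+2) := pow_nonneg hx0 _
          have e1 : (1/4 + x^N/4) * (1 - x^(N+2)) = 1/4 + x^N/4 - x^(N+2)/4 - x^N*x^(N+2)/4 := by ring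
          rw [e1]
          have hle14 : x^(N+2) ≤ 1/4 := by
            calc x^(N+2) ≤ x^N/4 := h3
            _ ≤ 1/4 := by have : x^N ≤ 1 := pow_le_one₀ hx0 (by linarith); linarith
          have h6 : x^N * x^(N+2) ≤ x^N / 4 := by
            calc x^N * x^(N+2) ≤ x^N * (1/4) := mul_le_mul_of_nonneg_left hle14 h1
            _ = x^N/4 := by ring
          linarith
    _ ≤ (∏ j ∈ Finset.range (N+1), (1 - x^(j+1))) * (1 - x^(N+1+1)) := by
          apply mul_le_mul_of_nonneg_right ih h5



lemma aux_prod_one_sub' (x : ℝ) (hx0 : 0 ≤ x) (hx : x ≤ 1/2) (M : ℕ) :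
    (1/4 : ℝ) ≤ ∏ j ∈ Finset.range M, (1 - x^(j+1)) := by
  cases M with
  | zero => simp; norm_num
  | succ N =>
    have := aux_prod_one_sub x hx0 hx N
    have h1 : (0:ℝ) ≤ x^N := pow_nonneg hx0 N
    linarith

lemma count_prod_lb (q m k : ℕ) (hq : 2 ≤ q) (hk : k ≤ m) :
    ((q:ℝ))^(m*k) ≤ 4 * ∏ i ∈ Finset.range k, ((q:ℝ)^m - (q:ℝ)^i) := by
  have hq0 : (0:ℝ) < q := by positivity
  have hq1 : (1:ℝ) ≤ q := by exact_mod_cast Nat.one_le_of_lt hq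
  set x : ℝ := (q:ℝ)⁻¹ with hxdef
  have hx0 : 0 ≤ x := by positivity
  have hx : x ≤ 1/2 := by
    have h2 : (2:ℝ) ≤ q := by exact_mod_cast hq
    rw [hxdef]
    calc (q:ℝ)⁻¹ ≤ (2:ℝ)⁻¹ := by
          apply inv_anti₀ (by norm_num) h2
    _ = 1/2 := by norm_num
  have hfac : ∀ i ∈ Finset.range k, ((q:ℝ)^m - (q:ℝ)^i) = (q:ℝ)^m * (1 - x^(m-i)) := by
    intro i hi
    have him : i ≤ m := le_trans (Nat.le_of_lt_succ (Nat.lt_succ_of_lt (Finset.mem_range.mp hi))) hk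
    have : (q:ℝ)^m * x^(m-i) = (q:ℝ)^i := by
      rw [hxdef, inv_pow, mul_inv_eq_iff_eq_mul₀ (by positivity), ← pow_add]
      congr 1
      omega
    rw [mul_sub, mul_one, this]
  rw [Finset.prod_congr rfl hfac, Finset.prod_mul_distrib, Finset.prod_const, Finset.card_range, ← pow_mul]
  have hB : (1/4:ℝ) ≤ ∏ i ∈ Finset.range k, (1 - x^(m-i)) := by
    have hre : ∏ i ∈ Finset.range k, (1 - x^(m-i))
        = ∏ j ∈ Finset.Ico (m-k) m, (1 - x^(j+1)) := by
      rw [Finset.prod_Ico_eq_prod_range]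
      have hmk : m - (m - k) = k := by omega
      rw [hmk]
      rw [← Finset.prod_range_reflect]
      apply Finset.prod_congr rfl
      intro i hi
      have he : m - (k - 1 - i) = m - k + i + 1 := by
        have := Finset.mem_range.mp hi; omega
      rw [he]
    rw [hre]
    have hsplit : (∏ j ∈ Finset.Ico 0 (m-k), (1 - x^(j+1))) * (∏ j ∈ Finset.Ico (m-k) m, (1 - x^(j+1)))
        = ∏ j ∈ Finset.Ico 0 m, (1 - x^(j+1)) :=
      Finset.prod_Ico_consecutive _ (Nat.zero_le _) (Nat.sub_le _ _)
    have hfull : (1/4:ℝ) ≤ ∏ j ∈ Finset.Ico 0 m, (1 - x^(j+1)) := by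
      rw [← Finset.range_eq_Ico]
      exact aux_prod_one_sub' x hx0 hx m
    have hfac01 : ∀ j : ℕ, 0 ≤ 1 - x^(j+1) ∧ 1 - x^(j+1) ≤ 1 := by
      intro j
      have h1 : x^(j+1) ≤ 1 := pow_le_one₀ hx0 (by linarith)
      have h2 : 0 ≤ x^(j+1) := pow_nonneg hx0 _
      constructor <;> linarith
    have hA1 : (∏ j ∈ Finset.Ico 0 (m-k), (1 - x^(j+1))) ≤ 1 :=
      Finset.prod_le_one (fun j _ => (hfac01 j).1) (fun j _ => (hfac01 j).2)
    have hB0 : 0 ≤ ∏ j ∈ Finset.Ico (m-k) m, (1 - x^(j+1)) :=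
      Finset.prod_nonneg (fun j _ => (hfac01 j).1)
    calc (1/4:ℝ) ≤ ∏ j ∈ Finset.Ico 0 m, (1 - x^(j+1)) := hfull
    _ = (∏ j ∈ Finset.Ico 0 (m-k), (1 - x^(j+1))) * (∏ j ∈ Finset.Ico (m-k) m, (1 - x^(j+1))) := hsplit.symm
    _ ≤ 1 * ∏ j ∈ Finset.Ico (m-k) m, (1 - x^(j+1)) :=
        mul_le_mul_of_nonneg_right hA1 hB0
    _ = _ := one_mul _
  have hqmk : (0:ℝ) ≤ (q:ℝ)^(m*k) := by positivity
  calc ((q:ℝ))^(m*k) = (q:ℝ)^(m*k) * 1 := (mul_one _).symm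
  _ ≤ (q:ℝ)^(m*k) * (4 * ∏ i ∈ Finset.range k, (1 - x^(m-i))) := by
      apply mul_le_mul_of_nonneg_left _ hqmk
      linarith
  _ = 4 * ((q:ℝ)^(m*k) * ∏ i ∈ Finset.range k, (1 - x^(m-i))) := by ring



lemma count_prod_lb_nat (q m k : ℕ) (hq : 2 ≤ q) (hk : k ≤ m) :
    q^(m*k) ≤ 4 * ∏ i ∈ Finset.range k, (q^m - q^i) := by
  have h := count_prod_lb q m k hq hk
  have hcast : ((∏ i ∈ Finset.range k, (q^m - q^i) : ℕ) : ℝ)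
      = ∏ i ∈ Finset.range k, ((q:ℝ)^m - (q:ℝ)^i) := by
    rw [Nat.cast_prod]
    apply Finset.prod_congr rfl
    intro i hi
    have : q^i ≤ q^m :=
      Nat.pow_le_pow_right (by omega) (le_trans (Nat.le_of_lt (Finset.mem_range.mp hi)) hk)
    push_cast [Nat.cast_sub this]
    ring
  have h2 : ((q^(m*k) : ℕ) : ℝ) ≤ ((4 * ∏ i ∈ Finset.range k, (q^m - q^i) : ℕ) : ℝ) := by
    rw [Nat.cast_mul, hcast, Nat.cast_pow]
    norm_num
    exact h
  exact_mod_cast h2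

lemma multiset_count_swap {β γ : Type*} (M : Multiset β) (T : Finset γ) (p : β → γ → Prop)
    [∀ b c, Decidable (p b c)] :
    (M.map (fun b => (T.filter (fun c => p b c)).card)).sum
      = ∑ c ∈ T, Multiset.card (M.filter (fun b => p b c)) := by
  induction M using Multiset.induction with
  | empty => simp
  | cons a M ih =>
    rw [Multiset.map_cons, Multiset.sum_cons, ih]
    have hstep : ∀ c ∈ T, Multiset.card (Multiset.filter (fun b => p b c) (a ::ₘ M))
        = (if p a c then 1 else 0) + Multiset.card (M.filter (fun b => p b c)) := by
      intro c _
      rw [Multiset.filter_cons]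
      rw [Multiset.card_add]
      congr 1
      split <;> simp
    rw [Finset.sum_congr rfl hstep, Finset.sum_add_distrib]
    congr 1
    rw [Finset.sum_boole]
    simp
lemma multiset_sum_map_le {β : Type*} (M : Multiset β) (g : β → ℕ) (B : ℕ)
    (h : ∀ b ∈ M, B ≤ g b) :
    Multiset.card M * B ≤ (M.map g).sum := by
  induction M using Multiset.induction with
  | empty => simp
  | cons a M ih =>
    rw [Multiset.map_cons, Multiset.sum_cons, Multiset.card_cons]
    have h1 := h a (Multiset.mem_cons_self a M)
    have h2 := ih (fun b hb => h b (Multiset.mem_cons_of_mem hb))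
    calc (Multiset.card M + 1) * B = B + Multiset.card M * B := by ring
    _ ≤ g a + (M.map g).sum := Nat.add_le_add h1 h2


lemma multiset_exists_le_card {β : Type*} (C : Multiset β) (k : ℕ) (h : k ≤ Multiset.card C) :
    ∃ S : Multiset β, S ≤ C ∧ Multiset.card S = k := by
  induction C using Multiset.induction generalizing k with
  | empty => exact ⟨0, le_refl _, by simp at h ⊢; omega⟩
  | cons a C ih =>
    cases k with
    | zero => exact ⟨0, Multiset.zero_le _, rfl⟩
    | succ k =>
      obtain ⟨S, hS, hcard⟩ := ih k (by simpa using h)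
      exact ⟨a ::ₘ S, Multiset.cons_le_cons a hS, by simp [hcard]⟩

section LA

variable {K V : Type*} [Field K] [AddCommGroup V] [Module K V]

lemma multiset_sum_le_of (M : Multiset (Submodule K V)) (S : Submodule K V)
    (h : ∀ W ∈ M, W ≤ S) : M.sum ≤ S := by
  induction M using Multiset.induction with
  | empty => simp
  | cons a M ih =>
    rw [Multiset.sum_cons]
    have : a ⊔ M.sum ≤ S :=
      sup_le (h a (Multiset.mem_cons_self a M)) (ih (fun W hW => h W (Multiset.mem_cons_of_mem hW)))
    simpa [Submodule.add_eq_sup] using this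

lemma le_multiset_sum_of_mem (M : Multiset (Submodule K V)) (W : Submodule K V) (h : W ∈ M) :
    W ≤ M.sum := by
  induction M using Multiset.induction with
  | empty => simp at h
  | cons a M ih =>
    rw [Multiset.sum_cons, Submodule.add_eq_sup]
    rcases Multiset.mem_cons.mp h with rfl | hm
    · exact le_sup_left
    · exact le_trans (ih hm) le_sup_right

variable [FiniteDimensional K V]

lemma finrank_multiset_sum_le (M : Multiset (Submodule K V)) (L : ℕ)
    (h : ∀ W ∈ M, Module.finrank K W ≤ L) :
    Module.finrank K M.sum ≤ Multiset.card M * L := by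
  induction M using Multiset.induction with
  | empty => simp; exact finrank_bot K V
  | cons a M ih =>
    rw [Multiset.sum_cons, Submodule.add_eq_sup]
    have h1 := Submodule.finrank_sup_add_finrank_inf_eq a M.sum
    have h2 : Module.finrank K a ≤ L := h a (Multiset.mem_cons_self a M)
    have h3 := ih (fun W hW => h W (Multiset.mem_cons_of_mem hW))
    have h4 : Module.finrank K ↥(a ⊔ M.sum) ≤ Module.finrank K a + Module.finrank K M.sum := by omega
    simp only [Multiset.card_cons]
    calc Module.finrank K ↥(a ⊔ M.sum) ≤ Module.finrank K a + Module.finrank K M.sum := h4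
    _ ≤ L + Multiset.card M * L := by omega
    _ = (Multiset.card M + 1) * L := by ring

lemma finrank_le_map_add_ker {Q : Type*} [AddCommGroup Q] [Module K Q]
    (f : V →ₗ[K] Q) (U : Submodule K V) :
    Module.finrank K U ≤ Module.finrank K (U.map f) + Module.finrank K (LinearMap.ker f) := by
  have h1 := LinearMap.finrank_range_add_finrank_ker (f.domRestrict U)
  rw [LinearMap.range_domRestrict] at h1
  have h2 : Module.finrank K (LinearMap.ker (f.domRestrict U)) ≤
      Module.finrank K (LinearMap.ker f) := by
    set g0 : (LinearMap.ker (f.domRestrict U)) →ₗ[K] V :=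
      U.subtype.comp (LinearMap.ker (f.domRestrict U)).subtype with hg0
    have hmem : ∀ x, g0 x ∈ LinearMap.ker f := by
      intro x
      have hx := x.2
      rw [LinearMap.mem_ker] at hx ⊢
      rw [LinearMap.domRestrict_apply] at hx
      simpa [hg0] using hx
    set g : (LinearMap.ker (f.domRestrict U)) →ₗ[K] (LinearMap.ker f) :=
      g0.codRestrict _ hmem with hg
    have hinj : Function.Injective g := by
      intro x y hxy
      have h0 : g0 x = g0 y := by
        have := congrArg Subtype.val hxy
        simpa [hg, LinearMap.codRestrict_apply] using this
      have h0' : ((x : U) : V) = ((y : U) : V) := by simpa [hg0] using h0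
      exact Subtype.ext (Subtype.ext h0')
    exact LinearMap.finrank_le_finrank_of_injective hinj
  omega

end LA


section P4
variable {K Q : Type*} [Field K] [AddCommGroup Q] [Module K Q] [FiniteDimensional K Q]

lemma inf_ker_findim {k : ℕ} (f : Fin k → Module.Dual K Q) (hf : LinearIndependent K f) :
    Module.finrank K ((⨅ i, LinearMap.ker (f i) : Submodule K Q)) + k ≤ Module.finrank K Q := by
  classical
  set Φ : Q →ₗ[K] (Fin k → K) := LinearMap.pi f with hΦ
  have hker : LinearMap.ker Φ = ⨅ i, LinearMap.ker (f i) := LinearMap.ker_pi f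
  have hrn := LinearMap.finrank_range_add_finrank_ker Φ
  have hrange : k ≤ Module.finrank K (LinearMap.range Φ) := by
    set R := LinearMap.range Φ with hR
    set T : Module.Dual K R →ₗ[K] Module.Dual K Q := Φ.rangeRestrict.dualMap with hT
    have hmem : ∀ i, f i ∈ LinearMap.range T := by
      intro i
      refine ⟨(LinearMap.proj i).comp R.subtype, ?_⟩
      ext v
      simp [hT, LinearMap.dualMap_apply, hΦ]
    have hspan : Submodule.span K (Set.range f) ≤ LinearMap.range T := by
      rw [Submodule.span_le]
      rintro x ⟨i, rfl⟩
      exact hmem i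
    have h1 : Module.finrank K (Submodule.span K (Set.range f)) = k := by
      rw [finrank_span_eq_card hf, Fintype.card_fin]
    have h2 : Module.finrank K (Submodule.span K (Set.range f)) ≤
        Module.finrank K (LinearMap.range T) := Submodule.finrank_mono hspan
    have h3 : Module.finrank K (LinearMap.range T) ≤ Module.finrank K (Module.Dual K R) :=
      LinearMap.finrank_range_le T
    have h4 : Module.finrank K (Module.Dual K R) = Module.finrank K R :=
      Subspace.dual_finrank_eq
    omega
  rw [hker] at hrn
  omega
end P4

section
variable {K Q : Type*} [Field K] [AddCommGroup Q] [Module K Q]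

lemma indep_val {P : Submodule K Q} {k : ℕ} (g : Fin k → P) (hg : LinearIndependent K g) :
    LinearIndependent K (fun i => (g i : Q)) :=
  hg.map' P.subtype (Submodule.ker_subtype _)

lemma indep_into {P : Submodule K Q} {k : ℕ} (f : Fin k → Q) (hm : ∀ i, f i ∈ P)
    (hf : LinearIndependent K f) :
    LinearIndependent K (fun i => (⟨f i, hm i⟩ : P)) :=
  LinearIndependent.of_comp P.subtype (by exact hf)
end

section P5
variable {K Q : Type*} [Field K] [Fintype K] [AddCommGroup Q] [Module K Q]
  [FiniteDimensional K Q] [Finite Q]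

noncomputable def vanEquiv (W : Submodule K Q) (k : ℕ) :
    {f : Fin k → Module.Dual K Q // LinearIndependent K f ∧ ∀ i, W ≤ LinearMap.ker (f i)}
      ≃ {g : Fin k → W.dualAnnihilator // LinearIndependent K g} where
  toFun f :=
    have hm : ∀ i, f.1 i ∈ W.dualAnnihilator := fun i =>
      (Submodule.mem_dualAnnihilator _).mpr (fun w hw => f.2.2 i hw)
    ⟨fun i => ⟨f.1 i, hm i⟩, indep_into f.1 hm f.2.1⟩
  invFun g := ⟨fun i => (g.1 i : Module.Dual K Q),
    indep_val g.1 g.2,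
    fun i w hw => by
      have h2 := (g.1 i).2
      rw [Submodule.mem_dualAnnihilator] at h2
      exact h2 w hw⟩
  left_inv f := by ext i; rfl
  right_inv g := by ext i; rfl

lemma card_vanishing_indep (W : Submodule K Q) (k : ℕ)
    (hk : k ≤ Module.finrank K Q - Module.finrank K W) :
    Nat.card {f : Fin k → Module.Dual K Q // LinearIndependent K f ∧ ∀ i, W ≤ LinearMap.ker (f i)}
      = ∏ i ∈ Finset.range k,
          (Fintype.card K ^ (Module.finrank K Q - Module.finrank K W) - Fintype.card K ^ i) := by
  classical
  haveI : Finite (Module.Dual K Q) :=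
    Finite.of_injective (fun φ => (φ : Q → K)) DFunLike.coe_injective
  have hdim : Module.finrank K W.dualAnnihilator
      = Module.finrank K Q - Module.finrank K W := by
    have h1 : Module.finrank K (Q ⧸ W) = Module.finrank K W.dualAnnihilator :=
      LinearEquiv.finrank_eq (Subspace.quotEquivAnnihilator W)
    have h2 := Submodule.finrank_quotient_add_finrank W
    omega
  rw [Nat.card_congr (vanEquiv W k)]
  haveI : Finite W.dualAnnihilator := inferInstance
  rw [card_linearIndependent (K := K) (V := W.dualAnnihilator) (by omega : k ≤ Module.finrank K W.dualAnnihilator)]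
  rw [hdim, ← Fin.prod_univ_eq_prod_range]
end P5


theorem alphabet_size_lower_bound (q α h ℓ t ε r : ℕ)
    (K : Type) [Field K] [Fintype K] (hq : Fintype.card K = q)
    (hα : 2 ≤ α) (hr1 : 1 ≤ r) (hh : 1 ≤ h) (hℓ : 1 ≤ ℓ) (ht : 1 ≤ t)
    (hhe : 2 * ℓ ≤ h - ε)
    (hpos : 0 < (r : ℝ) + ((α - (h - ε) / ℓ + 1 : ℕ) : ℝ) - (α : ℝ))
    (C : Multiset (Submodule K (Fin (h * t) → K)))
    (hcardC : Multiset.card C = r)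
    (hdim : ∀ W ∈ C, Module.finrank K W ≤ ℓ * t)
    (hcov : ∀ M : Multiset (Submodule K (Fin (h * t) → K)), M ≤ C →
      Multiset.card M = α → (h - ε) * t ≤ Module.finrank K M.sum) :
    (((r : ℝ) + ((α - (h - ε) / ℓ + 1 : ℕ) : ℝ) - (α : ℝ)) /
        (4 * ((α - (h - ε) / ℓ + 1 : ℕ) : ℝ))) ^ ((1 : ℝ) / (ℓ * (ε * t + 1))) ≤
      (q : ℝ) ^ t := by
  classical
  have hq2 : 2 ≤ q := by
    rw [← hq]; exact Fintype.one_lt_card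
  set s : ℕ := (h - ε) / ℓ with hs_def
  set θ : ℕ := α - s + 1 with hθ_def
  set L : ℕ := ℓ * t with hL_def
  set e : ℕ := ε * t with he_def
  set D : ℕ := (h - ε) * t with hD_def
  set E : ℕ := ℓ * (ε * t + 1) with hE_def
  have hθ1 : 1 ≤ θ := by omega
  have hL1 : 1 ≤ L := by
    have := Nat.mul_le_mul hℓ ht; simpa [hL_def] using this
  have hE1 : 1 ≤ E := by
    have : 1 * 1 ≤ ℓ * (ε * t + 1) := Nat.mul_le_mul hℓ (by omega)
    simpa [hE_def] using this
  have hεh : ε ≤ h := by omega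
  have hnDe : h * t = D + e := by
    rw [hD_def, he_def, ← Nat.add_mul]
    congr 1
    omega
  have hs2 : 2 ≤ s := by
    rw [hs_def]
    rw [Nat.le_div_iff_mul_le (by omega : 0 < ℓ)]
    omega
  have hsl : s * ℓ ≤ h - ε := by
    rw [hs_def]; exact Nat.div_mul_le_self _ _
  have hsLD : s * L ≤ D := by
    rw [hD_def, hL_def, ← Nat.mul_assoc]
    exact Nat.mul_le_mul_right t hsl
  -- target wrap-up: reduce to a single real inequality
  have hY1 : (1:ℝ) ≤ (q:ℝ)^t := one_le_pow₀ (by exact_mod_cast Nat.one_le_of_lt hq2)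
  have hYE1 : (1:ℝ) ≤ ((q:ℝ)^t)^E := one_le_pow₀ hY1
  have hθR1 : (1:ℝ) ≤ (θ:ℝ) := by exact_mod_cast hθ1
  suffices key : (r : ℝ) + (θ:ℝ) - (α:ℝ) ≤ 4 * (θ:ℝ) * ((q:ℝ)^t)^E by
    have hden : (0:ℝ) < 4 * (θ:ℝ) := by linarith
    have hXpos : 0 < ((r : ℝ) + (θ:ℝ) - (α:ℝ)) / (4 * (θ:ℝ)) := div_pos hpos hden
    have hXle : ((r : ℝ) + (θ:ℝ) - (α:ℝ)) / (4 * (θ:ℝ)) ≤ ((q:ℝ)^t)^E := by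
      rw [div_le_iff₀ hden]
      calc (r : ℝ) + (θ:ℝ) - (α:ℝ) ≤ 4 * (θ:ℝ) * ((q:ℝ)^t)^E := key
      _ ≤ ((q:ℝ)^t)^E * (4 * (θ:ℝ)) := by linarith [mul_comm (4 * (θ:ℝ)) (((q:ℝ)^t)^E)]
    have hexp : ((ℓ:ℝ) * ((ε:ℝ) * (t:ℝ) + 1)) = ((E:ℕ):ℝ) := by
      rw [hE_def]; push_cast; ring
    rw [hexp]
    have hEne : ((E:ℕ):ℝ) ≠ 0 := by
      have : (1:ℝ) ≤ (E:ℝ) := by exact_mod_cast hE1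
      linarith
    have hX0 : (0:ℝ) ≤ ((r : ℝ) + (θ:ℝ) - (α:ℝ)) / (4 * (θ:ℝ)) := le_of_lt hXpos
    have hcalc : (((r : ℝ) + (θ:ℝ) - (α:ℝ)) / (4 * (θ:ℝ))) ^ ((1:ℝ) / (E:ℝ))
        ≤ (((q:ℝ)^t)^E) ^ ((1:ℝ) / (E:ℝ)) :=
      Real.rpow_le_rpow hX0 hXle (by positivity)
    calc (((r : ℝ) + (θ:ℝ) - (α:ℝ)) / (4 * (θ:ℝ))) ^ ((1:ℝ) / ((E:ℕ):ℝ))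
        ≤ (((q:ℝ)^t)^E) ^ ((1:ℝ) / (E:ℝ)) := hcalc
    _ = (((q:ℝ)^t)^((E:ℕ):ℝ)) ^ ((1:ℝ) / (E:ℝ)) := by
        rw [Real.rpow_natCast]
    _ = ((q:ℝ)^t) ^ (((E:ℕ):ℝ) * ((1:ℝ) / (E:ℝ))) := by
        rw [← Real.rpow_mul (by positivity)]
    _ = ((q:ℝ)^t) ^ (1:ℝ) := by
        rw [mul_one_div, div_self hEne]
    _ = (q:ℝ)^t := Real.rpow_one _
  -- now prove key
  by_cases hrα : r < α
  · have hrR : (r:ℝ) ≤ (α:ℝ) - 1 := by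
      have : (r:ℝ) + 1 ≤ (α:ℝ) := by exact_mod_cast hrα
      linarith
    nlinarith
  push_neg at hrα
  -- r ≥ α
  by_cases hsα : α < s
  · -- contradiction
    exfalso
    obtain ⟨M, hMle, hMcard⟩ := multiset_exists_le_card C α (by omega)
    have h1 : D ≤ Module.finrank K M.sum := hcov M hMle hMcard
    have h2 : Module.finrank K M.sum ≤ α * L := by
      have h2' := finrank_multiset_sum_le M L (fun W hW => hdim W (Multiset.mem_of_le hMle hW))
      rwa [hMcard] at h2'
    have h3 : (α + 1) * L ≤ s * L := Nat.mul_le_mul_right L (by omega)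
    have h4 : α * L + L = (α+1) * L := by ring
    omega
  push_neg at hsα
  -- main case : s ≤ α, α ≤ r
  obtain ⟨S₀, hS₀le, hS₀card⟩ := multiset_exists_le_card C (s - 2) (by omega)
  obtain ⟨C', hC'⟩ := Multiset.le_iff_exists_add.mp hS₀le
  have hC'card : s - 2 + Multiset.card C' = r := by
    rw [← hcardC, hC', Multiset.card_add, hS₀card]
  have hmemC : ∀ W ∈ C', W ∈ C := by
    intro W hW; rw [hC']; exact Multiset.mem_add.mpr (Or.inr hW)
  set V₀ : Submodule K (Fin (h*t) → K) := S₀.sum with hV₀_def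
  have hV₀dim : Module.finrank K V₀ ≤ (s-2) * L := by
    rw [hV₀_def, ← hS₀card]
    exact finrank_multiset_sum_le S₀ L (fun W hW => hdim W (Multiset.mem_of_le hS₀le hW))
  set π := V₀.mkQ with hπ_def
  haveI : Finite (Fin (h*t) → K) := by infer_instance
  haveI : Finite ((Fin (h*t) → K) ⧸ V₀) := Finite.of_surjective π (Submodule.mkQ_surjective V₀)
  haveI : Finite (Module.Dual K ((Fin (h*t) → K) ⧸ V₀)) :=
    Finite.of_injective (fun φ => (φ : ((Fin (h*t) → K) ⧸ V₀) → K)) DFunLike.coe_injective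
  set nQ : ℕ := Module.finrank K ((Fin (h*t) → K) ⧸ V₀) with hnQ_def
  have hnV : Module.finrank K (Fin (h*t) → K) = h * t := by
    rw [Module.finrank_fin_fun]
  have hnQ : nQ + Module.finrank K V₀ = h * t := by
    have h0 := Submodule.finrank_quotient_add_finrank V₀
    rw [hnV] at h0
    rw [hnQ_def]
    exact h0
  have hsplit : (s-2) * L + 2 * L = s * L := by
    rw [← Nat.add_mul]
    congr 1
    omega
  have hnQL : L + e + 1 ≤ nQ := by omega
  -- the tuple space
  set F := (Fin (e+1) → Module.Dual K ((Fin (h*t) → K) ⧸ V₀)) with hF_def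
  haveI : Fintype F := Fintype.ofFinite F
  set Pred : Submodule K (Fin (h * t) → K) → F → Prop :=
    fun W f => LinearIndependent K f ∧ ∀ i, W.map π ≤ LinearMap.ker (f i) with hPred_def
  set cnt : Submodule K (Fin (h * t) → K) → ℕ :=
    fun W => (Finset.univ.filter (fun f => Pred W f)).card with hcnt_def
  -- Step A : per-element lower bound
  have stepA : ∀ W ∈ C', q ^ ((nQ - L) * (e+1)) ≤ 4 * cnt W := by
    intro W hW
    have hWL : Module.finrank K (W.map π) ≤ L := by
      have h1 : Module.finrank K (W.map π) ≤ Module.finrank K W := Submodule.finrank_map_le π W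
      exact le_trans h1 (hdim W (hmemC W hW))
    set mW : ℕ := nQ - Module.finrank K (W.map π) with hmW_def
    have hm0 : nQ - L ≤ mW := by omega
    have hkm : e + 1 ≤ mW := by omega
    have hcard : cnt W = ∏ i ∈ Finset.range (e+1), (q ^ mW - q ^ i) := by
      show (Finset.univ.filter (fun f => Pred W f)).card = _
      have h1 : (Finset.univ.filter (fun f => Pred W f)).card
          = Nat.card {f : F // Pred W f} := by
        rw [Nat.card_eq_fintype_card, Fintype.card_subtype]
      rw [h1]
      have h2 := card_vanishing_indep (K := K) (W.map π) (e+1) (by omega)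
      rw [hq, ← hnQ_def, ← hmW_def] at h2
      exact h2
    rw [hcard]
    calc q ^ ((nQ - L) * (e+1)) ≤ q ^ (mW * (e+1)) :=
        Nat.pow_le_pow_right (by omega) (Nat.mul_le_mul_right _ hm0)
    _ ≤ 4 * ∏ i ∈ Finset.range (e+1), (q ^ mW - q ^ i) := count_prod_lb_nat q mW (e+1) hq2 hkm
  -- Step B : per-tuple bound
  have stepB : ∀ f : F, Multiset.card (C'.filter (fun W => Pred W f)) ≤ θ := by
    intro f
    by_contra hcon
    push_neg at hcon
    obtain ⟨M'', hM''le, hM''card⟩ :=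
      multiset_exists_le_card (C'.filter (fun W => Pred W f)) (θ+1) (by omega)
    have hsub : M'' ≤ C' := le_trans hM''le (Multiset.filter_le _ _)
    have hPredAll : ∀ W ∈ M'', Pred W f := by
      intro W hW
      have hWf := Multiset.mem_of_le hM''le hW
      exact (Multiset.mem_filter.mp hWf).2
    have hne : ∃ W, W ∈ M'' := by
      rw [← Multiset.card_pos_iff_exists_mem]
      omega
    obtain ⟨W₀, hW₀⟩ := hne
    have hf_ind : LinearIndependent K f := (hPredAll W₀ hW₀).1
    set N : Submodule K ((Fin (h*t) → K) ⧸ V₀) := ⨅ i, LinearMap.ker (f i) with hN_def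
    have hNdim : Module.finrank K N + (e+1) ≤ nQ := inf_ker_findim f hf_ind
    set M : Multiset (Submodule K (Fin (h * t) → K)) := S₀ + M'' with hM_def
    have hMC : M ≤ C := by
      rw [hM_def, hC']
      exact add_le_add_right hsub S₀
    have hMcard : Multiset.card M = α := by
      rw [hM_def, Multiset.card_add, hS₀card, hM''card]
      omega
    have hD : D ≤ Module.finrank K M.sum := hcov M hMC hMcard
    have hup : Module.finrank K M.sum ≤
        Module.finrank K (M.sum.map π) + Module.finrank K V₀ := by
      have := finrank_le_map_add_ker π M.sum
      rwa [hπ_def, Submodule.ker_mkQ] at this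
    have hmaple : M.sum.map π ≤ N := by
      have hsum : M.sum ≤ N.comap π := by
        apply multiset_sum_le_of
        intro W hW
        rw [hM_def] at hW
        rcases Multiset.mem_add.mp hW with h0 | h0
        · have hWV₀ : W ≤ V₀ := le_multiset_sum_of_mem S₀ W h0
          have : V₀ ≤ N.comap π := by
            intro x hx
            rw [Submodule.mem_comap]
            have : π x = 0 := by
              rw [hπ_def]
              rwa [← LinearMap.mem_ker, Submodule.ker_mkQ]
            rw [this]
            exact Submodule.zero_mem N
          exact le_trans hWV₀ this
        · have hP2 := (hPredAll W h0).2
          rw [← Submodule.map_le_iff_le_comap, hN_def]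
          exact le_iInf (fun i => hP2 i)
      calc M.sum.map π ≤ (N.comap π).map π := Submodule.map_mono hsum
      _ ≤ N := Submodule.map_comap_le π N
    have hfr : Module.finrank K (M.sum.map π) ≤ Module.finrank K N :=
      Submodule.finrank_mono hmaple
    omega
  -- Step C : combine
  have hcardF : Fintype.card F = q ^ (nQ * (e+1)) := by
    haveI : Fintype (Module.Dual K ((Fin (h*t) → K) ⧸ V₀)) := Fintype.ofFinite _
    have hdual : Nat.card (Module.Dual K ((Fin (h*t) → K) ⧸ V₀)) = q ^ nQ := by
      rw [Nat.card_eq_fintype_card, Module.card_eq_pow_finrank (K := K), hq]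
      congr 1
      rw [hnQ_def]
      exact Subspace.dual_finrank_eq
    have h1 : Nat.card F = q ^ (nQ * (e+1)) := by
      show Nat.card (Fin (e+1) → Module.Dual K ((Fin (h*t) → K) ⧸ V₀)) = _
      rw [Nat.card_fun, hdual, Nat.card_eq_fintype_card, Fintype.card_fin, ← pow_mul]
    rw [← Nat.card_eq_fintype_card, h1]
  have hfub : (C'.map cnt).sum
      = ∑ f ∈ Finset.univ, Multiset.card (C'.filter (fun W => Pred W f)) := by
    rw [hcnt_def]
    exact multiset_count_swap C' Finset.univ Pred
  have hup2 : (C'.map cnt).sum ≤ θ * q ^ (nQ * (e+1)) := by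
    rw [hfub]
    calc ∑ f ∈ Finset.univ, Multiset.card (C'.filter (fun W => Pred W f))
        ≤ ∑ _f ∈ (Finset.univ : Finset F), θ := Finset.sum_le_sum (fun f _ => stepB f)
    _ = Fintype.card F * θ := by rw [Finset.sum_const, Finset.card_univ, smul_eq_mul]
    _ = θ * q ^ (nQ * (e+1)) := by rw [hcardF, Nat.mul_comm]
  have hlow : Multiset.card C' * q ^ ((nQ - L) * (e+1)) ≤ 4 * (C'.map cnt).sum := by
    have h1 : Multiset.card C' * q ^ ((nQ - L) * (e+1)) ≤ (C'.map (fun W => 4 * cnt W)).sum :=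
      multiset_sum_map_le C' (fun W => 4 * cnt W) _ stepA
    have h2 : (C'.map (fun W => 4 * cnt W)).sum = 4 * (C'.map cnt).sum := by
      rw [← Multiset.sum_map_mul_left]
    exact le_trans h1 (le_of_eq h2)
  have hmain : Multiset.card C' ≤ 4 * θ * q ^ (L * (e+1)) := by
    have hpow : q ^ (nQ * (e+1)) = q ^ ((nQ - L) * (e+1)) * q ^ (L * (e+1)) := by
      rw [← pow_add]
      congr 1
      have : nQ - L + L = nQ := by omega
      calc nQ * (e+1) = (nQ - L + L) * (e+1) := by rw [this]
      _ = (nQ - L) * (e+1) + L * (e+1) := by ring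
    have hchain : Multiset.card C' * q ^ ((nQ - L) * (e+1))
        ≤ (4 * θ * q ^ (L * (e+1))) * q ^ ((nQ - L) * (e+1)) := by
      calc Multiset.card C' * q ^ ((nQ - L) * (e+1)) ≤ 4 * (C'.map cnt).sum := hlow
      _ ≤ 4 * (θ * q ^ (nQ * (e+1))) := Nat.mul_le_mul_left 4 hup2
      _ = (4 * θ * q ^ (L * (e+1))) * q ^ ((nQ - L) * (e+1)) := by
          rw [hpow]; ring
    exact Nat.le_of_mul_le_mul_right hchain (by positivity)
  -- conclude key
  have hrle : r ≤ (s - 2) + 4 * θ * q ^ (L * (e+1)) := by omega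
  have hLE : L * (e+1) = t * E := by
    rw [hL_def, hE_def, he_def]; ring
  have hqcast : ((q:ℝ))^(L*(e+1)) = ((q:ℝ)^t)^E := by
    rw [hLE, pow_mul]
  have hrleR : (r:ℝ) ≤ ((s:ℝ) - 2) + 4 * (θ:ℝ) * ((q:ℝ)^t)^E := by
    have := hrle
    have hcast : ((s - 2 + 4 * θ * q ^ (L * (e+1)) : ℕ) : ℝ)
        = ((s:ℝ) - 2) + 4 * (θ:ℝ) * ((q:ℝ)^t)^E := by
      push_cast [Nat.cast_sub hs2]
      rw [hqcast]
    rw [← hcast]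
    exact_mod_cast this
  have hθcast : (θ:ℝ) = (α:ℝ) - (s:ℝ) + 1 := by
    rw [hθ_def]
    push_cast [Nat.cast_sub hsα]
    ring
  rw [hθcast] at hrleR ⊢
  linarith
end
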